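/- arXiv:1910.05000 — 3 statements merged into one kernel-verified Lean document; each statement's English description precedes it below -/
import Mathlib

section
/- Let X be ℓp for some 1 ≤ p < ∞, or c₀, endowed with the coordinatewise product, and let w = (wₙ)ₙ≥₁ be a bounded sequence of nonzero complex numbers (so that the weighted backward shift B_w is a bounded operator on X). Then the following are equivalent: (i) B_w is hypercyclic on X; (ii) B_w supports a hypercyclic algebra; (iii) there exists a strictly increasing sequence of integers (n_k) such that |w₁⋯w_{n_k}| → +∞. -/
open Filter Topology

/-- The weighted backward shift: `(B_w x)ₙ = w_{n+1} x_{n+1}`. -/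
def Bw (w : ℕ → ℂ) (x : ℕ → ℂ) : ℕ → ℂ := fun n => w (n + 1) * x (n + 1)

/-- Membership in `ℓp`. -/
def Memlp (p : ℝ) (x : ℕ → ℂ) : Prop := Summable fun n => ‖x n‖ ^ p

/-- The `ℓp` distance. -/
noncomputable def lpDist (p : ℝ) (x y : ℕ → ℂ) : ℝ :=
  (∑' n : ℕ, ‖x n - y n‖ ^ p) ^ (1 / p)

/-- Membership in `c₀`. -/
def Memc0 (x : ℕ → ℂ) : Prop := Tendsto x atTop (𝓝 (0 : ℂ))

/-- `x` is hypercyclic for `B_w` on `ℓp`. -/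
def HClp (p : ℝ) (w : ℕ → ℂ) (x : ℕ → ℂ) : Prop :=
  Memlp p x ∧ ∀ y : ℕ → ℂ, Memlp p y → ∀ ε : ℝ, 0 < ε →
    ∃ n : ℕ, lpDist p ((Bw w)^[n] x) y < ε

/-- `x` is hypercyclic for `B_w` on `c₀`. -/
def HCc0 (w : ℕ → ℂ) (x : ℕ → ℂ) : Prop :=
  Memc0 x ∧ ∀ y : ℕ → ℂ, Memc0 y → ∀ ε : ℝ, 0 < ε →
    ∃ n : ℕ, ∀ k : ℕ, ‖(Bw w)^[n] x k - y k‖ < ε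

/-- `B_w` supports a hypercyclic algebra on `ℓp` (with the coordinatewise product). -/
def HCAlgLp (p : ℝ) (w : ℕ → ℂ) : Prop :=
  ∃ A : NonUnitalSubalgebra ℂ (ℕ → ℂ), (∀ x ∈ A, Memlp p x) ∧
    (∃ x ∈ A, x ≠ 0) ∧ ∀ x ∈ A, x ≠ 0 → HClp p w x

/-- `B_w` supports a hypercyclic algebra on `c₀` (with the coordinatewise product). -/
def HCAlgC0 (w : ℕ → ℂ) : Prop :=
  ∃ A : NonUnitalSubalgebra ℂ (ℕ → ℂ), (∀ x ∈ A, Memc0 x) ∧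
    (∃ x ∈ A, x ≠ 0) ∧ ∀ x ∈ A, x ≠ 0 → HCc0 w x

/-- There is a strictly increasing sequence `(n_k)` along which `|w₁ ⋯ w_{n_k}| → ∞`. -/
def ShiftCond (w : ℕ → ℂ) : Prop :=
  ∃ nk : ℕ → ℕ, StrictMono nk ∧
    Tendsto (fun k => ∏ i ∈ Finset.Icc 1 (nk k), ‖w i‖) atTop atTop

open Polynomial

noncomputable def Wn (w : ℕ → ℂ) (s : ℕ) : ℝ := ∏ i ∈ Finset.Ioc 0 s, ‖w i‖

noncomputable def piw (w : ℕ → ℂ) (j r : ℕ) : ℂ := ∏ i ∈ Finset.Ioc j r, w i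

lemma Wn_eq_Icc (w : ℕ → ℂ) (s : ℕ) : Wn w s = ∏ i ∈ Finset.Icc 1 s, ‖w i‖ := by
  rw [Wn, ← Finset.Icc_add_one_left_eq_Ioc, zero_add]

lemma Wn_pos {w : ℕ → ℂ} (hw : ∀ n : ℕ, 1 ≤ n → w n ≠ 0) (s : ℕ) : 0 < Wn w s := by
  apply Finset.prod_pos
  intro i hi
  simp only [Finset.mem_Ioc] at hi
  exact norm_pos_iff.2 (hw i hi.1)

lemma piw_ne_zero {w : ℕ → ℂ} (hw : ∀ n : ℕ, 1 ≤ n → w n ≠ 0) (j r : ℕ) : piw w j r ≠ 0 := by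
  apply Finset.prod_ne_zero_iff.2
  intro i hi
  simp only [Finset.mem_Ioc] at hi
  exact hw i (Nat.one_le_iff_ne_zero.2 (by omega : i ≠ 0))

lemma norm_piw (w : ℕ → ℂ) (j r : ℕ) : ‖piw w j r‖ = ∏ i ∈ Finset.Ioc j r, ‖w i‖ := by
  simp [piw]

lemma norm_piw_mul {w : ℕ → ℂ} (j r : ℕ) (hjr : j ≤ r) :
    ‖piw w j r‖ * Wn w j = Wn w r := by
  rw [norm_piw, Wn, Wn, mul_comm]
  exact Finset.prod_Ioc_consecutive _ (Nat.zero_le j) hjr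

lemma Bw_iter (w : ℕ → ℂ) (z : ℕ → ℂ) (n j : ℕ) :
    ((Bw w)^[n] z) j = piw w j (j + n) * z (j + n) := by
  induction n generalizing z with
  | zero => simp [piw]
  | succ n ih =>
      rw [Function.iterate_succ_apply, ih]
      have : piw w j (j + n) * (Bw w z) (j + n) = piw w j (j + (n+1)) * z (j + (n+1)) := by
        show piw w j (j + n) * (w (j + n + 1) * z (j + n + 1)) = _
        have h1 : piw w j (j + n) * w (j + n + 1) = piw w j (j + (n + 1)) := by
          rw [piw, piw, show j + (n+1) = (j+n) + 1 from rfl,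
            Finset.prod_Ioc_succ_top (Nat.le_add_right j n)]
        rw [← mul_assoc, h1]
        ring_nf
      rw [this]

-- bound on products of weights
lemma prod_norm_le {w : ℕ → ℂ} {C : ℝ} (hC : 1 ≤ C) (hb : ∀ n, ‖w n‖ ≤ C) (j r : ℕ) :
    ‖piw w j r‖ ≤ C ^ (r - j) := by
  rw [norm_piw]
  calc ∏ i ∈ Finset.Ioc j r, ‖w i‖ ≤ ∏ _i ∈ Finset.Ioc j r, C :=
        Finset.prod_le_prod (fun i _ => norm_nonneg _) (fun i _ => hb i)
    _ = C ^ (Finset.Ioc j r).card := by rw [Finset.prod_const]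
    _ ≤ C ^ (r - j) := by rw [Nat.card_Ioc]

lemma Wn_le_mul {w : ℕ → ℂ} {C : ℝ} (hC : 1 ≤ C) (hb : ∀ n, ‖w n‖ ≤ C)
    {a b : ℕ} (hab : a ≤ b) : Wn w b ≤ Wn w a * C ^ (b - a) := by
  have h := norm_piw_mul (w := w) a b hab
  calc Wn w b = ‖piw w a b‖ * Wn w a := h.symm
    _ ≤ C ^ (b - a) * Wn w a := by
        apply mul_le_mul_of_nonneg_right (prod_norm_le hC hb a b)
        · apply Finset.prod_nonneg; intro i _; exact norm_nonneg _
    _ = Wn w a * C ^ (b - a) := mul_comm _ _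

def PeakProp (w : ℕ → ℂ) : Prop :=
  ∀ M : ℝ, ∀ N₀ L : ℕ, ∃ n, N₀ ≤ n ∧ ∀ j ≤ L, M ≤ Wn w (n + j)

lemma peak_of_shiftCond {w : ℕ → ℂ} {C : ℝ} (hC : 1 ≤ C) (hb : ∀ n, ‖w n‖ ≤ C)
    (hw : ∀ n : ℕ, 1 ≤ n → w n ≠ 0) (hsc : ShiftCond w) : PeakProp w := by
  obtain ⟨nk, hmono, htend⟩ := hsc
  intro M N₀ L
  set M' : ℝ := max M 1 with hM'
  have hCL : (0:ℝ) < C ^ L := pow_pos (lt_of_lt_of_le one_pos hC) L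
  have h1 : ∀ᶠ k in atTop, M' * C ^ L ≤ ∏ i ∈ Finset.Icc 1 (nk k), ‖w i‖ :=
    htend.eventually_ge_atTop _
  obtain ⟨K, hK⟩ := h1.exists_forall_of_atTop
  set k := max K (N₀ + L) with hk
  have hNK : M' * C ^ L ≤ Wn w (nk k) := by
    rw [Wn_eq_Icc]; exact hK k (le_max_left _ _)
  have hkk : N₀ + L ≤ nk k := le_trans (le_max_right _ _) hmono.le_apply
  refine ⟨nk k - L, by omega, ?_⟩
  intro j hj
  have hle : nk k - L + j ≤ nk k := by omega
  have h2 : Wn w (nk k) ≤ Wn w (nk k - L + j) * C ^ L := by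
    calc Wn w (nk k) ≤ Wn w (nk k - L + j) * C ^ (nk k - (nk k - L + j)) :=
          Wn_le_mul hC hb hle
      _ ≤ Wn w (nk k - L + j) * C ^ L := by
          apply mul_le_mul_of_nonneg_left _ (le_of_lt (Wn_pos hw _))
          exact pow_le_pow_right₀ hC (by omega)
  have : M' * C ^ L ≤ Wn w (nk k - L + j) * C ^ L := le_trans hNK h2
  have h3 := le_of_mul_le_mul_right this hCL
  exact le_trans (le_max_left M 1) h3

-- coefficient sum bound for a polynomial
noncomputable def CP (P : ℂ[X]) : ℝ :=
  (P.natDegree + 1) * (1 + ∑ i ∈ Finset.range (P.natDegree + 1), ‖P.coeff i‖)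

lemma CP_pos (P : ℂ[X]) : 0 < CP P := by
  apply mul_pos
  · positivity
  · have : 0 ≤ ∑ i ∈ Finset.range (P.natDegree + 1), ‖P.coeff i‖ :=
      Finset.sum_nonneg fun i _ => norm_nonneg _
    linarith

lemma coeff_sum_bound (P : ℂ[X]) (i : ℕ) :
    ‖P.coeff i‖ ≤ 1 + ∑ j ∈ Finset.range (P.natDegree + 1), ‖P.coeff j‖ := by
  rcases le_or_gt i P.natDegree with h | h
  · have hmem : i ∈ Finset.range (P.natDegree + 1) := Finset.mem_range.2 (Nat.lt_succ_of_le h)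
    have h1 : ‖P.coeff i‖ ≤ ∑ j ∈ Finset.range (P.natDegree + 1), ‖P.coeff j‖ :=
      Finset.single_le_sum (f := fun j => ‖P.coeff j‖) (fun j _ => norm_nonneg _) hmem
    linarith
  · rw [P.coeff_eq_zero_of_natDegree_lt h]
    have : (0:ℝ) ≤ ∑ j ∈ Finset.range (P.natDegree + 1), ‖P.coeff j‖ :=
      Finset.sum_nonneg fun j _ => norm_nonneg _
    rw [norm_zero]
    linarith

lemma coeff_le_CP (P : ℂ[X]) (i : ℕ) : ‖P.coeff i‖ ≤ CP P := by
  have h1 := coeff_sum_bound P i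
  rw [CP]
  have h2 : (1:ℝ) ≤ (P.natDegree + 1 : ℝ) := by
    have := Nat.cast_nonneg (α := ℝ) P.natDegree
    linarith
  have h3 : (0:ℝ) ≤ 1 + ∑ j ∈ Finset.range (P.natDegree + 1), ‖P.coeff j‖ := by
    have : (0:ℝ) ≤ ∑ j ∈ Finset.range (P.natDegree + 1), ‖P.coeff j‖ :=
      Finset.sum_nonneg fun j _ => norm_nonneg _
    linarith
  nlinarith

-- plain evaluation bound
lemma eval_norm_le {P : ℂ[X]} (h0 : P.coeff 0 = 0) {t : ℂ} (ht : ‖t‖ ≤ 1) :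
    ‖P.eval t‖ ≤ CP P * ‖t‖ := by
  rw [eval_eq_sum_range]
  calc ‖∑ i ∈ Finset.range (P.natDegree + 1), P.coeff i * t ^ i‖
      ≤ ∑ i ∈ Finset.range (P.natDegree + 1), ‖P.coeff i * t ^ i‖ := norm_sum_le _ _
    _ ≤ ∑ _i ∈ Finset.range (P.natDegree + 1),
          (1 + ∑ i ∈ Finset.range (P.natDegree + 1), ‖P.coeff i‖) * ‖t‖ := by
        apply Finset.sum_le_sum
        intro i hi
        rcases Nat.eq_zero_or_pos i with rfl | hipos
        · simp [h0]; positivity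
        · rw [norm_mul, norm_pow]
          have h1 : ‖t‖ ^ i ≤ ‖t‖ := by
            calc ‖t‖ ^ i ≤ ‖t‖ ^ 1 := pow_le_pow_of_le_one (norm_nonneg t) ht hipos
              _ = ‖t‖ := pow_one _
          have h2 := coeff_sum_bound P i
          calc ‖P.coeff i‖ * ‖t‖ ^ i ≤ ‖P.coeff i‖ * ‖t‖ :=
                mul_le_mul_of_nonneg_left h1 (norm_nonneg _)
            _ ≤ _ := mul_le_mul_of_nonneg_right h2 (norm_nonneg _)
    _ = CP P * ‖t‖ := by rw [Finset.sum_const, Finset.card_range, CP]; push_cast; ring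

-- key block evaluation lemma
lemma key_eval {P : ℂ[X]} (hP : P ≠ 0) (h0 : P.coeff 0 = 0) (π y t : ℂ)
    (hroot : π * t ^ P.natTrailingDegree = y) (ht : ‖t‖ ≤ 1) :
    ‖π * P.eval t - P.coeff P.natTrailingDegree * y‖ ≤ CP P * ‖y‖ * ‖t‖ := by
  set m := P.natTrailingDegree with hm
  set D := P.natDegree with hD
  have hmD : m ≤ D := natTrailingDegree_le_natDegree P
  have h1 : π * P.eval t = ∑ i ∈ Finset.range (D + 1), P.coeff i * (π * t ^ i) := by
    rw [eval_eq_sum_range, Finset.mul_sum]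
    apply Finset.sum_congr rfl
    intro i _
    ring
  have h2 : ∑ i ∈ Finset.range (D + 1), P.coeff i * (π * t ^ i)
      = ∑ i ∈ Finset.Ico m (D + 1), P.coeff i * (π * t ^ i) := by
    symm
    apply Finset.sum_subset
    · intro i hi
      simp only [Finset.mem_Ico] at hi
      exact Finset.mem_range.2 hi.2
    · intro i hi hni
      simp only [Finset.mem_range] at hi
      simp only [Finset.mem_Ico, not_and, not_lt] at hni
      have : i < m := by
        by_contra hc
        push_neg at hc
        exact absurd (hni hc) (by omega)
      rw [coeff_eq_zero_of_lt_natTrailingDegree this, zero_mul]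
  have h3 : ∑ i ∈ Finset.Ico m (D + 1), P.coeff i * (π * t ^ i)
      = ∑ j ∈ Finset.range (D + 1 - m), P.coeff (m + j) * (y * t ^ j) := by
    rw [Finset.sum_Ico_eq_sum_range]
    apply Finset.sum_congr rfl
    intro j _
    rw [pow_add, ← hroot]
    ring
  have hDm : D + 1 - m = (D - m) + 1 := by omega
  have h4 : ∑ j ∈ Finset.range (D + 1 - m), P.coeff (m + j) * (y * t ^ j)
      = P.coeff m * y + ∑ j ∈ Finset.range (D - m), P.coeff (m + (j+1)) * (y * t ^ (j+1)) := by
    rw [hDm, Finset.sum_range_succ']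
    simp [add_comm]
  rw [h1, h2, h3, h4]
  have h5 : P.coeff m * y + (∑ j ∈ Finset.range (D - m), P.coeff (m + (j+1)) * (y * t ^ (j+1)))
      - P.coeff m * y = ∑ j ∈ Finset.range (D - m), P.coeff (m + (j+1)) * (y * t ^ (j+1)) := by
    ring
  rw [h5]
  calc ‖∑ j ∈ Finset.range (D - m), P.coeff (m + (j+1)) * (y * t ^ (j+1))‖
      ≤ ∑ j ∈ Finset.range (D - m), ‖P.coeff (m + (j+1)) * (y * t ^ (j+1))‖ := norm_sum_le _ _
    _ ≤ ∑ _j ∈ Finset.range (D - m),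
          (1 + ∑ i ∈ Finset.range (D + 1), ‖P.coeff i‖) * (‖y‖ * ‖t‖) := by
        apply Finset.sum_le_sum
        intro j _
        rw [norm_mul, norm_mul, norm_pow]
        have h6 : ‖t‖ ^ (j+1) ≤ ‖t‖ := by
          calc ‖t‖ ^ (j+1) ≤ ‖t‖ ^ 1 := pow_le_pow_of_le_one (norm_nonneg t) ht (by omega)
            _ = ‖t‖ := pow_one _
        have h7 := coeff_sum_bound P (m + (j+1))
        calc ‖P.coeff (m + (j+1))‖ * (‖y‖ * ‖t‖ ^ (j+1))
            ≤ ‖P.coeff (m + (j+1))‖ * (‖y‖ * ‖t‖) := by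
              apply mul_le_mul_of_nonneg_left _ (norm_nonneg _)
              exact mul_le_mul_of_nonneg_left h6 (norm_nonneg _)
          _ ≤ _ := mul_le_mul_of_nonneg_right h7 (by positivity)
    _ = (D - m : ℕ) * ((1 + ∑ i ∈ Finset.range (D + 1), ‖P.coeff i‖) * (‖y‖ * ‖t‖)) := by
        rw [Finset.sum_const, Finset.card_range, nsmul_eq_mul]
    _ ≤ CP P * ‖y‖ * ‖t‖ := by
        rw [CP]
        have hc : ((D - m : ℕ) : ℝ) ≤ (D + 1 : ℝ) := by
          push_cast
          have : (D - m : ℕ) ≤ D := Nat.sub_le _ _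
          have := (Nat.cast_le (α := ℝ)).2 this
          linarith
        have hs : (0:ℝ) ≤ 1 + ∑ i ∈ Finset.range (D + 1), ‖P.coeff i‖ := by positivity
        have hyt : (0:ℝ) ≤ ‖y‖ * ‖t‖ := by positivity
        calc ((D - m : ℕ):ℝ) * ((1 + ∑ i ∈ Finset.range (D + 1), ‖P.coeff i‖) * (‖y‖ * ‖t‖))
            ≤ (D + 1 : ℝ) * ((1 + ∑ i ∈ Finset.range (D + 1), ‖P.coeff i‖) * (‖y‖ * ‖t‖)) := by
              apply mul_le_mul_of_nonneg_right hc (by positivity)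
          _ = (D + 1 : ℝ) * (1 + ∑ i ∈ Finset.range (D + 1), ‖P.coeff i‖) * ‖y‖ * ‖t‖ := by
              push_cast; ring
          _ = _ := by push_cast; ring

-- rpow helpers
lemma rpow_le_self {t p : ℝ} (h0 : 0 ≤ t) (h1 : t ≤ 1) (hp : 1 ≤ p) : t ^ p ≤ t := by
  rcases eq_or_lt_of_le h0 with h | h
  · rw [← h, Real.zero_rpow (by linarith)]
  · calc t ^ p ≤ t ^ (1:ℝ) := Real.rpow_le_rpow_of_exponent_ge h h1 hp
      _ = t := Real.rpow_one t

lemma add_rpow_le {a b p : ℝ} (ha : 0 ≤ a) (hb : 0 ≤ b) (hp : 1 ≤ p) :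
    (a + b) ^ p ≤ (2:ℝ) ^ p * (a ^ p + b ^ p) := by
  have hmax : a + b ≤ 2 * max a b := by
    rcases le_total a b with h | h
    · rw [max_eq_right h]; linarith
    · rw [max_eq_left h]; linarith
  have h0m : (0:ℝ) ≤ max a b := le_max_of_le_left ha
  have h1 : (a + b) ^ p ≤ (2 * max a b) ^ p :=
    Real.rpow_le_rpow (by linarith) hmax (by linarith)
  have h2 : (2 * max a b) ^ p = 2 ^ p * (max a b) ^ p :=
    Real.mul_rpow (by norm_num) h0m
  have h3 : (max a b) ^ p ≤ a ^ p + b ^ p := by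
    rcases le_total a b with h | h
    · rw [max_eq_right h]
      have := Real.rpow_nonneg ha p
      linarith
    · rw [max_eq_left h]
      have := Real.rpow_nonneg hb p
      linarith
  calc (a+b)^p ≤ 2^p * (max a b)^p := h2 ▸ h1
    _ ≤ 2^p * (a^p + b^p) := by
        apply mul_le_mul_of_nonneg_left h3 (Real.rpow_nonneg (by norm_num) p)

-- list encoding of targets
noncomputable def toVec (l : List (ℚ × ℚ)) : ℕ → ℂ :=
  fun j => ((l.getD j (0,0)).1 : ℂ) + ((l.getD j (0,0)).2 : ℂ) * Complex.I

lemma toVec_eq_zero (l : List (ℚ × ℚ)) {j : ℕ} (hj : l.length ≤ j) : toVec l j = 0 := by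
  rw [toVec, List.getD_eq_default _ _ hj]
  simp

lemma rat_approx (a : ℂ) {ε : ℝ} (hε : 0 < ε) :
    ∃ q : ℚ × ℚ, ‖((q.1 : ℂ) + (q.2 : ℂ) * Complex.I) - a‖ < ε := by
  obtain ⟨q1, hq1⟩ := exists_rat_near a.re (by positivity : (0:ℝ) < ε/2)
  obtain ⟨q2, hq2⟩ := exists_rat_near a.im (by positivity : (0:ℝ) < ε/2)
  refine ⟨(q1, q2), ?_⟩
  set z := ((q1 : ℂ) + (q2 : ℂ) * Complex.I) - a with hz
  have hre : z.re = (q1 : ℝ) - a.re := by simp [hz]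
  have him : z.im = (q2 : ℝ) - a.im := by simp [hz]
  calc ‖z‖ ≤ |z.re| + |z.im| := Complex.norm_le_abs_re_add_abs_im z
    _ < ε := by
        rw [hre, him]
        rw [abs_sub_comm (q1:ℝ) a.re, abs_sub_comm (q2:ℝ) a.im] at *
        linarith [hq1, hq2]

-- existence of an approximating list
lemma list_approx (z : ℕ → ℂ) (c : ℂ) (hc : c ≠ 0) (L : ℕ) {ε : ℝ} (hε : 0 < ε) :
    ∃ l : List (ℚ × ℚ), l.length = L ∧ ∀ j < L, ‖c * toVec l j - z j‖ < ε := by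
  have hcn : 0 < ‖c‖ := norm_pos_iff.2 hc
  have hεc : 0 < ε / ‖c‖ := by positivity
  choose q hq using fun j : ℕ => rat_approx (z j / c) hεc
  refine ⟨(List.range L).map q, by simp, ?_⟩
  intro j hj
  have hget : ((List.range L).map q).getD j (0,0) = q j := by
    rw [List.getD_eq_getElem?_getD]
    rw [List.getElem?_map]
    simp [List.getElem?_range hj]
  have : toVec ((List.range L).map q) j = ((q j).1 : ℂ) + ((q j).2 : ℂ) * Complex.I := by
    rw [toVec, hget]
  rw [this]
  have h1 : ‖(((q j).1 : ℂ) + ((q j).2 : ℂ) * Complex.I) - z j / c‖ < ε / ‖c‖ := hq j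
  have h2 : c * (((q j).1 : ℂ) + ((q j).2 : ℂ) * Complex.I) - z j
      = c * ((((q j).1 : ℂ) + ((q j).2 : ℂ) * Complex.I) - z j / c) := by
    field_simp
  rw [h2, norm_mul]
  calc ‖c‖ * ‖(((q j).1 : ℂ) + ((q j).2 : ℂ) * Complex.I) - z j / c‖
      < ‖c‖ * (ε / ‖c‖) := by
        exact mul_lt_mul_of_pos_left h1 hcn
    _ = ε := by
        rw [mul_div_assoc', mul_comm, mul_div_assoc, div_self (ne_of_gt hcn), mul_one]

-- enumeration hitting every value infinitely often
noncomputable def enum : ℕ → ℕ × List (ℚ × ℚ) :=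
  fun k => (exists_surjective_nat (ℕ × List (ℚ × ℚ))).choose (Nat.unpair k).2

lemma enum_spec (t : ℕ × List (ℚ × ℚ)) (K : ℕ) : ∃ k, K ≤ k ∧ enum k = t := by
  obtain ⟨m, hm⟩ := (exists_surjective_nat (ℕ × List (ℚ × ℚ))).choose_spec t
  exact ⟨Nat.pair K m, Nat.left_le_pair K m, by rw [enum, Nat.unpair_pair, hm]⟩

def GoodW (w : ℕ → ℂ) (C : ℝ) : Prop :=
  (1 ≤ C) ∧ (∀ n, ‖w n‖ ≤ C) ∧ (∀ n : ℕ, 1 ≤ n → w n ≠ 0) ∧ PeakProp w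

noncomputable def mk (k : ℕ) : ℕ := (enum k).1 + 1
noncomputable def lk (k : ℕ) : List (ℚ × ℚ) := (enum k).2
noncomputable def Lk (k : ℕ) : ℕ := (lk k).length
noncomputable def yk (k : ℕ) : ℕ → ℂ := toVec (lk k)

lemma mk_pos (k : ℕ) : 1 ≤ mk k := Nat.le_add_left 1 _

noncomputable def Yb (k : ℕ) : ℝ := 1 + ∑ j ∈ Finset.range (Lk k), ‖yk k j‖
noncomputable def Wb (w : ℕ → ℂ) (k : ℕ) : ℝ := 1 + ∑ j ∈ Finset.range (Lk k), Wn w j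

noncomputable def dlt (C : ℝ) (k prevn : ℕ) : ℝ :=
  min 1 ((2:ℝ)⁻¹^(k+1) * ((Lk k : ℝ)+1)⁻¹ * (C⁻¹)^prevn)

noncomputable def Mreq (w : ℕ → ℂ) (C : ℝ) (k prevn : ℕ) : ℝ :=
  (Yb k * Wb w k) / (dlt C k prevn)^(mk k) + 1

lemma one_le_Yb (k : ℕ) : 1 ≤ Yb k := by
  have : 0 ≤ ∑ j ∈ Finset.range (Lk k), ‖yk k j‖ := Finset.sum_nonneg fun j _ => norm_nonneg _
  rw [Yb]; linarith

lemma dlt_pos {C : ℝ} (hC : 1 ≤ C) (k prevn : ℕ) : 0 < dlt C k prevn := by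
  apply lt_min one_pos
  have h1 : (0:ℝ) < (2:ℝ)⁻¹^(k+1) := by positivity
  have h2 : (0:ℝ) < ((Lk k : ℝ)+1)⁻¹ := by positivity
  have h3 : (0:ℝ) < (C⁻¹)^prevn := by positivity
  positivity

lemma dlt_le_one (C : ℝ) (k prevn : ℕ) : dlt C k prevn ≤ 1 := min_le_left _ _

lemma dlt_le (C : ℝ) (k prevn : ℕ) :
    dlt C k prevn ≤ (2:ℝ)⁻¹^(k+1) * ((Lk k : ℝ)+1)⁻¹ * (C⁻¹)^prevn := min_le_right _ _


lemma mkC_ne (k : ℕ) : (((mk k : ℝ)⁻¹ : ℂ)) ≠ 0 := by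
  have h : mk k ≠ 0 := by have := mk_pos k; omega
  simp [h]


section CONSTR

variable (w : ℕ → ℂ) (C : ℝ) (hg : GoodW w C)
include hg

lemma one_le_Wb (k : ℕ) : 1 ≤ Wb w k := by
  have : 0 ≤ ∑ j ∈ Finset.range (Lk k), Wn w j :=
    Finset.sum_nonneg fun j _ => le_of_lt (Wn_pos hg.2.2.1 j)
  rw [Wb]; linarith

noncomputable def ns : ℕ → ℕ
  | 0 => (hg.2.2.2 (Mreq w C 0 0) 0 (Lk 0)).choose
  | (k+1) => (hg.2.2.2 (Mreq w C (k+1) (ns k)) (ns k + Lk k + 1) (Lk (k+1))).choose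

noncomputable def pr : ℕ → ℕ
  | 0 => 0
  | (k+1) => ns w C hg k

noncomputable def dl (k : ℕ) : ℝ := dlt C k (pr w C hg k)

lemma ns_spec (k : ℕ) : ∀ j ≤ Lk k, Mreq w C k (pr w C hg k) ≤ Wn w (ns w C hg k + j) := by
  cases k with
  | zero => exact ((hg.2.2.2 (Mreq w C 0 0) 0 (Lk 0)).choose_spec).2
  | succ k =>
      exact ((hg.2.2.2 (Mreq w C (k+1) (ns w C hg k))
        (ns w C hg k + Lk k + 1) (Lk (k+1))).choose_spec).2

lemma ns_gap (k : ℕ) : ns w C hg k + Lk k + 1 ≤ ns w C hg (k+1) :=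
  ((hg.2.2.2 (Mreq w C (k+1) (ns w C hg k))
    (ns w C hg k + Lk k + 1) (Lk (k+1))).choose_spec).1

lemma ns_block_lt {a b : ℕ} (hab : a < b) : ns w C hg a + Lk a < ns w C hg b := by
  induction b with
  | zero => omega
  | succ b ih =>
      rcases Nat.lt_succ_iff_lt_or_eq.1 hab with h | h
      · have h2 := ns_gap w C hg b
        have h3 := ih h
        omega
      · subst h
        have := ns_gap w C hg a
        omega

lemma ns_mono : StrictMono (ns w C hg) := by
  apply strictMono_nat_of_lt_succ
  intro k
  have := ns_gap w C hg k
  omega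

lemma block_unique {a b r : ℕ} (ha : ns w C hg a ≤ r ∧ r < ns w C hg a + Lk a)
    (hb : ns w C hg b ≤ r ∧ r < ns w C hg b + Lk b) : a = b := by
  by_contra hne
  rcases Nat.lt_or_ge a b with h | h
  · have := ns_block_lt w C hg h; omega
  · have hba : b < a := by omega
    have := ns_block_lt w C hg hba; omega

open Classical in
noncomputable def xv : ℕ → ℂ := fun r =>
  if h : ∃ k, ns w C hg k ≤ r ∧ r < ns w C hg k + Lk k then
    (yk (Nat.find h) (r - ns w C hg (Nat.find h)) / piw w (r - ns w C hg (Nat.find h)) r)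
      ^ (((mk (Nat.find h) : ℝ)⁻¹ : ℂ))
  else 0

lemma xv_gap {r : ℕ} (h : ∀ k, ¬(ns w C hg k ≤ r ∧ r < ns w C hg k + Lk k)) :
    xv w C hg r = 0 := by
  rw [xv]
  exact dif_neg (by push_neg at h ⊢; intro k; have := h k; omega)

lemma xv_block {k j : ℕ} (hj : j < Lk k) :
    xv w C hg (ns w C hg k + j)
      = (yk k j / piw w j (ns w C hg k + j)) ^ (((mk k : ℝ)⁻¹ : ℂ)) := by
  classical
  rw [xv]
  have hex : ∃ a, ns w C hg a ≤ ns w C hg k + j ∧ ns w C hg k + j < ns w C hg a + Lk a :=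
    ⟨k, by omega, by omega⟩
  rw [dif_pos hex]
  have hfind := Nat.find_spec hex
  have hk : Nat.find hex = k := block_unique w C hg hfind ⟨by omega, by omega⟩
  simp only [hk]
  have hj2 : ns w C hg k + j - ns w C hg k = j := by omega
  rw [hj2]

lemma xv_block_pow {k j : ℕ} (hj : j < Lk k) :
    piw w j (ns w C hg k + j) * (xv w C hg (ns w C hg k + j)) ^ (mk k) = yk k j := by
  rw [xv_block w C hg hj]
  have he : (((mk k : ℝ)⁻¹ : ℂ)) = ((mk k : ℂ))⁻¹ := by push_cast; ring
  rw [he, Complex.cpow_nat_inv_pow _ (by have := mk_pos k; omega)]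
  exact mul_div_cancel₀ _ (piw_ne_zero hg.2.2.1 _ _)

lemma xv_block_norm {k j : ℕ} (hj : j < Lk k) :
    ‖xv w C hg (ns w C hg k + j)‖ ≤ dl w C hg k := by
  have hC := hg.1
  have hdl : 0 < dl w C hg k := dlt_pos hC k _
  rw [xv_block w C hg hj]
  by_cases hy : yk k j = 0
  · rw [hy, zero_div, Complex.zero_cpow (mkC_ne k), norm_zero]
    linarith
  · set z : ℂ := yk k j / piw w j (ns w C hg k + j) with hzdef
    have hz : z ≠ 0 := div_ne_zero hy (piw_ne_zero hg.2.2.1 _ _)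
    have h1 : ‖z ^ (((mk k : ℝ)⁻¹ : ℂ))‖ = ‖z‖ ^ ((mk k : ℝ)⁻¹) := by
      rw [Complex.norm_cpow_of_ne_zero hz]
      simp
    rw [h1]
    have hWpos : 0 < Wn w (ns w C hg k + j) := Wn_pos hg.2.2.1 _
    have hWjpos : 0 < Wn w j := Wn_pos hg.2.2.1 _
    have hπn : 0 < ‖piw w j (ns w C hg k + j)‖ := norm_pos_iff.2 (piw_ne_zero hg.2.2.1 _ _)
    have hπ : ‖piw w j (ns w C hg k + j)‖ = Wn w (ns w C hg k + j) / Wn w j := by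
      have h := norm_piw_mul (w := w) j (ns w C hg k + j) (by omega)
      rw [← h]
      field_simp
    have hznorm : ‖z‖ = ‖yk k j‖ * Wn w j / Wn w (ns w C hg k + j) := by
      rw [hzdef, norm_div, hπ]
      rw [div_div_eq_mul_div]
    set a : ℝ := Yb k * Wb w k with ha
    have ha1 : 1 ≤ a := by
      have h1 := one_le_Yb k
      have h2 := one_le_Wb w C hg k
      nlinarith
    set d : ℝ := (dl w C hg k) ^ (mk k) with hd
    have hd0 : 0 < d := pow_pos hdl _
    have hnum : ‖yk k j‖ * Wn w j ≤ a := by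
      have h1 : ‖yk k j‖ ≤ Yb k := by
        have hmem : j ∈ Finset.range (Lk k) := Finset.mem_range.2 hj
        have := Finset.single_le_sum (f := fun i => ‖yk k i‖) (fun i _ => norm_nonneg _) hmem
        rw [Yb]; linarith
      have h2 : Wn w j ≤ Wb w k := by
        have hmem : j ∈ Finset.range (Lk k) := Finset.mem_range.2 hj
        have := Finset.single_le_sum (f := fun i => Wn w i)
          (fun i _ => le_of_lt (Wn_pos hg.2.2.1 i)) hmem
        rw [Wb]; linarith
      exact mul_le_mul h1 h2 (le_of_lt hWjpos) (by linarith [one_le_Yb k])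
    have hWr : a / d + 1 ≤ Wn w (ns w C hg k + j) := by
      have := ns_spec w C hg k j (le_of_lt hj)
      rw [Mreq] at this
      exact this
    have hWpos2 : 0 < Wn w (ns w C hg k + j) := hWpos
    have hadpos : 0 < a / d := by positivity
    have hzle : ‖z‖ ≤ d := by
      rw [hznorm]
      calc ‖yk k j‖ * Wn w j / Wn w (ns w C hg k + j)
          ≤ a / Wn w (ns w C hg k + j) := (div_le_div_iff_of_pos_right hWpos2).mpr hnum
        _ ≤ a / (a / d) := by
            apply div_le_div_of_nonneg_left (by linarith) hadpos (by linarith)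
        _ = d := by
            rw [div_div_eq_mul_div, mul_comm, mul_div_assoc, div_self (by linarith : a ≠ 0), mul_one]
    calc ‖z‖ ^ ((mk k : ℝ)⁻¹) ≤ d ^ ((mk k : ℝ)⁻¹) :=
          Real.rpow_le_rpow (norm_nonneg _) hzle (by positivity)
      _ = dl w C hg k := by
          rw [hd, ← Real.rpow_natCast (dl w C hg k) (mk k), ← Real.rpow_mul (le_of_lt hdl),
            mul_inv_cancel₀ (Nat.cast_ne_zero.2 (by have := mk_pos k; omega) : (mk k:ℝ) ≠ 0),
            Real.rpow_one]

lemma xv_cases (r : ℕ) :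
    xv w C hg r = 0 ∨ ∃ k j, j < Lk k ∧ r = ns w C hg k + j := by
  by_cases h : ∃ k, ns w C hg k ≤ r ∧ r < ns w C hg k + Lk k
  · obtain ⟨k, h1, h2⟩ := h
    exact Or.inr ⟨k, r - ns w C hg k, by omega, by omega⟩
  · push_neg at h
    exact Or.inl (xv_gap w C hg (by intro k; have := h k; omega))

lemma xv_norm_le_one (r : ℕ) : ‖xv w C hg r‖ ≤ 1 := by
  rcases xv_cases w C hg r with h | ⟨k, j, hj, rfl⟩
  · rw [h, norm_zero]; exact zero_le_one
  · exact le_trans (xv_block_norm w C hg hj) (dlt_le_one C k _)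

lemma blockSum (k : ℕ) :
    ∑ r ∈ Finset.Ico (ns w C hg k) (ns w C hg k + Lk k), ‖xv w C hg r‖
      ≤ (2:ℝ)⁻¹^(k+1) * (C⁻¹)^(pr w C hg k) := by
  have hC := hg.1
  rw [Finset.sum_Ico_eq_sum_range]
  simp only [Nat.add_sub_cancel_left]
  calc ∑ j ∈ Finset.range (Lk k), ‖xv w C hg (ns w C hg k + j)‖
      ≤ ∑ _j ∈ Finset.range (Lk k), dl w C hg k := by
        apply Finset.sum_le_sum
        intro j hj
        exact xv_block_norm w C hg (Finset.mem_range.1 hj)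
    _ = (Lk k : ℝ) * dl w C hg k := by rw [Finset.sum_const, Finset.card_range, nsmul_eq_mul]
    _ ≤ (Lk k : ℝ) * ((2:ℝ)⁻¹^(k+1) * ((Lk k : ℝ)+1)⁻¹ * (C⁻¹)^(pr w C hg k)) :=
        mul_le_mul_of_nonneg_left (dlt_le C k _) (Nat.cast_nonneg _)
    _ = ((Lk k : ℝ) * ((Lk k : ℝ)+1)⁻¹) * ((2:ℝ)⁻¹^(k+1) * (C⁻¹)^(pr w C hg k)) := by ring
    _ ≤ 1 * ((2:ℝ)⁻¹^(k+1) * (C⁻¹)^(pr w C hg k)) := by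
        apply mul_le_mul_of_nonneg_right _ (by positivity)
        rw [← div_eq_mul_inv, div_le_one (by positivity)]
        linarith
    _ = (2:ℝ)⁻¹^(k+1) * (C⁻¹)^(pr w C hg k) := one_mul _

lemma gap_zero {k r : ℕ} (h1 : ns w C hg k + Lk k ≤ r) (h2 : r < ns w C hg (k+1)) :
    xv w C hg r = 0 := by
  apply xv_gap
  intro k'
  rcases le_or_gt k' k with h | h
  · rcases eq_or_lt_of_le h with rfl | h
    · omega
    · have := ns_block_lt w C hg h
      omega
  · have h3 : ns w C hg (k+1) ≤ ns w C hg k' := (ns_mono w C hg).le_iff_le.2 h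
    omega

lemma ns_ge (k : ℕ) : k ≤ ns w C hg k := (ns_mono w C hg).le_apply

lemma tailB (k : ℕ) : ∀ K, k ≤ K →
    ∑ r ∈ Finset.Ico (ns w C hg k + Lk k) (ns w C hg K + Lk K), ‖xv w C hg r‖
      ≤ ((2:ℝ)⁻¹^(k+1) - (2:ℝ)⁻¹^(K+1)) * (C⁻¹)^(ns w C hg k) := by
  have hC := hg.1
  intro K
  induction K with
  | zero =>
      intro hk
      have : k = 0 := by omega
      subst this
      simp
  | succ K ih =>
      intro hk
      rcases eq_or_lt_of_le hk with h | h
      case inl => subst h; simp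
      · have hkK : k ≤ K := by omega
        have hi := ih hkK
        have hord1 : ns w C hg k + Lk k ≤ ns w C hg K + Lk K := by
          rcases eq_or_lt_of_le hkK with rfl | hlt
          · omega
          · have := ns_block_lt w C hg hlt; omega
        have hord2 : ns w C hg K + Lk K ≤ ns w C hg (K+1) := by
          have := ns_gap w C hg K; omega
        have hord3 : ns w C hg (K+1) ≤ ns w C hg (K+1) + Lk (K+1) := by omega
        rw [← Finset.sum_Ico_consecutive _ hord1 (le_trans hord2 hord3),
          ← Finset.sum_Ico_consecutive _ hord2 hord3]
        have hmid : ∑ r ∈ Finset.Ico (ns w C hg K + Lk K) (ns w C hg (K+1)), ‖xv w C hg r‖ = 0 := by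
          apply Finset.sum_eq_zero
          intro r hr
          simp only [Finset.mem_Ico] at hr
          rw [gap_zero w C hg hr.1 hr.2, norm_zero]
        have hblk : ∑ r ∈ Finset.Ico (ns w C hg (K+1)) (ns w C hg (K+1) + Lk (K+1)), ‖xv w C hg r‖
            ≤ (2:ℝ)⁻¹^(K+2) * (C⁻¹)^(ns w C hg K) := blockSum w C hg (K+1)
        have hCmono : (C⁻¹ : ℝ)^(ns w C hg K) ≤ (C⁻¹)^(ns w C hg k) := by
          apply pow_le_pow_of_le_one (by positivity) (inv_le_one_of_one_le₀ hC)
          exact (ns_mono w C hg).le_iff_le.2 hkK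
        have hhalf : ((2:ℝ)⁻¹)^(K+1+1) * (C⁻¹)^(ns w C hg K)
            ≤ ((2:ℝ)⁻¹^(K+1) - (2:ℝ)⁻¹^(K+1+1)) * (C⁻¹)^(ns w C hg k) := by
          have h2 : ((2:ℝ)⁻¹)^(K+1+1) = (2:ℝ)⁻¹^(K+1) * 2⁻¹ := pow_succ _ _
          have h4 : (0:ℝ) ≤ (2:ℝ)⁻¹^(K+1+1) := by positivity
          have h5 : ((2:ℝ)⁻¹^(K+1) - (2:ℝ)⁻¹^(K+1+1)) = (2:ℝ)⁻¹^(K+1+1) := by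
            rw [h2]; ring
          rw [h5]
          exact mul_le_mul_of_nonneg_left hCmono h4
        calc (∑ r ∈ Finset.Ico (ns w C hg k + Lk k) (ns w C hg K + Lk K), ‖xv w C hg r‖)
              + ((∑ r ∈ Finset.Ico (ns w C hg K + Lk K) (ns w C hg (K+1)), ‖xv w C hg r‖)
                + ∑ r ∈ Finset.Ico (ns w C hg (K+1)) (ns w C hg (K+1) + Lk (K+1)), ‖xv w C hg r‖)
            ≤ ((2:ℝ)⁻¹^(k+1) - (2:ℝ)⁻¹^(K+1)) * (C⁻¹)^(ns w C hg k)
              + (0 + (2:ℝ)⁻¹^(K+2) * (C⁻¹)^(ns w C hg K)) := by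
              apply add_le_add hi
              rw [hmid]
              exact add_le_add le_rfl hblk
          _ ≤ ((2:ℝ)⁻¹^(k+1) - (2:ℝ)⁻¹^(K+1+1)) * (C⁻¹)^(ns w C hg k) := by
              rw [zero_add]
              have := hhalf
              nlinarith [this]
lemma tailN (k N : ℕ) :
    ∑ r ∈ Finset.Ico (ns w C hg k + Lk k) N, ‖xv w C hg r‖
      ≤ (2:ℝ)⁻¹^(k+1) * (C⁻¹)^(ns w C hg k) := by
  have hC0 : (0:ℝ) < C := lt_of_lt_of_le one_pos hg.1
  set K := max k N with hK
  have h1 : N ≤ ns w C hg K + Lk K := by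
    have := ns_ge w C hg K
    omega
  calc ∑ r ∈ Finset.Ico (ns w C hg k + Lk k) N, ‖xv w C hg r‖
      ≤ ∑ r ∈ Finset.Ico (ns w C hg k + Lk k) (ns w C hg K + Lk K), ‖xv w C hg r‖ := by
        apply Finset.sum_le_sum_of_subset_of_nonneg
        · exact Finset.Ico_subset_Ico le_rfl h1
        · intro i _ _; exact norm_nonneg _
    _ ≤ ((2:ℝ)⁻¹^(k+1) - (2:ℝ)⁻¹^(K+1)) * (C⁻¹)^(ns w C hg k) :=
        tailB w C hg k K (le_max_left _ _)
    _ ≤ (2:ℝ)⁻¹^(k+1) * (C⁻¹)^(ns w C hg k) := by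
        apply mul_le_mul_of_nonneg_right _ (by positivity)
        have : (0:ℝ) ≤ (2:ℝ)⁻¹^(K+1) := by positivity
        linarith

lemma xv_summable : Summable (fun r => ‖xv w C hg r‖) := by
  apply summable_of_sum_range_le (c := (∑ r ∈ Finset.range (ns w C hg 0 + Lk 0), ‖xv w C hg r‖)
    + (2:ℝ)⁻¹^(0+1) * (C⁻¹)^(ns w C hg 0)) (fun n => norm_nonneg _)
  intro N
  rcases le_or_gt N (ns w C hg 0 + Lk 0) with h | h
  · have h1 : ∑ r ∈ Finset.range N, ‖xv w C hg r‖
        ≤ ∑ r ∈ Finset.range (ns w C hg 0 + Lk 0), ‖xv w C hg r‖ := by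
      apply Finset.sum_le_sum_of_subset_of_nonneg (Finset.range_subset_range.2 h)
      intro i _ _; exact norm_nonneg _
    have h2 : (0:ℝ) ≤ (2:ℝ)⁻¹^(0+1) * (C⁻¹)^(ns w C hg 0) := by
      have hC0 : (0:ℝ) < C := lt_of_lt_of_le one_pos hg.1
      positivity
    linarith
  · rw [Finset.range_eq_Ico, ← Finset.sum_Ico_consecutive _ (Nat.zero_le _) (le_of_lt h)]
    apply add_le_add
    · rw [← Finset.range_eq_Ico]
    · exact tailN w C hg 0 N

lemma xv_tsum_tail (k : ℕ) :
    ∑' j : ℕ, ‖xv w C hg (j + (ns w C hg k + Lk k))‖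
      ≤ (2:ℝ)⁻¹^(k+1) * (C⁻¹)^(ns w C hg k) := by
  have hs : Summable (fun j => ‖xv w C hg (j + (ns w C hg k + Lk k))‖) :=
    (summable_nat_add_iff (f := fun r => ‖xv w C hg r‖) (ns w C hg k + Lk k)).2 (xv_summable w C hg)
  apply Summable.tsum_le_of_sum_le hs
  intro s
  obtain ⟨N, hN⟩ := s.exists_nat_subset_range
  calc ∑ j ∈ s, ‖xv w C hg (j + (ns w C hg k + Lk k))‖
      ≤ ∑ j ∈ Finset.range N, ‖xv w C hg (j + (ns w C hg k + Lk k))‖ := by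
        apply Finset.sum_le_sum_of_subset_of_nonneg hN
        intro i _ _; exact norm_nonneg _
    _ = ∑ r ∈ Finset.Ico (ns w C hg k + Lk k) (ns w C hg k + Lk k + N), ‖xv w C hg r‖ := by
        rw [Finset.sum_Ico_eq_sum_range]
        simp only [Nat.add_sub_cancel_left]
        apply Finset.sum_congr rfl
        intro j _
        rw [add_comm]
    _ ≤ _ := tailN w C hg k _



lemma block_coord (P : ℂ[X]) (hP : P ≠ 0) (h0 : P.coeff 0 = 0) {k j : ℕ}
    (hm : mk k = P.natTrailingDegree) (hj : j < Lk k) :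
    ‖((Bw w)^[ns w C hg k] (fun i => P.eval (xv w C hg i))) j
      - P.coeff P.natTrailingDegree * yk k j‖ ≤ CP P * Yb k * dl w C hg k := by
  have hC := hg.1
  rw [Bw_iter, add_comm j (ns w C hg k)]
  have hroot : piw w j (ns w C hg k + j) * (xv w C hg (ns w C hg k + j)) ^ P.natTrailingDegree
      = yk k j := by
    rw [← hm]
    exact xv_block_pow w C hg hj
  have ht1 : ‖xv w C hg (ns w C hg k + j)‖ ≤ 1 := xv_norm_le_one w C hg _
  have hkey := key_eval hP h0 (piw w j (ns w C hg k + j)) (yk k j)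
    (xv w C hg (ns w C hg k + j)) hroot ht1
  apply le_trans hkey
  have h1 : ‖yk k j‖ ≤ Yb k := by
    have hmem : j ∈ Finset.range (Lk k) := Finset.mem_range.2 hj
    have := Finset.single_le_sum (f := fun i => ‖yk k i‖) (fun i _ => norm_nonneg _) hmem
    rw [Yb]; linarith
  have h2 : ‖xv w C hg (ns w C hg k + j)‖ ≤ dl w C hg k := xv_block_norm w C hg hj
  have hCP := CP_pos P
  have hdl : 0 < dl w C hg k := dlt_pos hC k _
  calc CP P * ‖yk k j‖ * ‖xv w C hg (ns w C hg k + j)‖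
      ≤ CP P * Yb k * ‖xv w C hg (ns w C hg k + j)‖ := by
        apply mul_le_mul_of_nonneg_right _ (norm_nonneg _)
        exact mul_le_mul_of_nonneg_left h1 (le_of_lt hCP)
    _ ≤ CP P * Yb k * dl w C hg k := by
        apply mul_le_mul_of_nonneg_left h2
        have := one_le_Yb k
        nlinarith

lemma out_coord (P : ℂ[X]) (h0 : P.coeff 0 = 0) (k j : ℕ) :
    ‖((Bw w)^[ns w C hg k] (fun i => P.eval (xv w C hg i))) j‖
      ≤ C ^ (ns w C hg k) * (CP P * ‖xv w C hg (j + ns w C hg k)‖) := by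
  have hC := hg.1
  rw [Bw_iter, norm_mul]
  have h1 : ‖piw w j (j + ns w C hg k)‖ ≤ C ^ (ns w C hg k) := by
    have := prod_norm_le hC hg.2.1 j (j + ns w C hg k)
    simpa using this
  have h2 : ‖P.eval (xv w C hg (j + ns w C hg k))‖ ≤ CP P * ‖xv w C hg (j + ns w C hg k)‖ :=
    eval_norm_le h0 (xv_norm_le_one w C hg _)
  apply mul_le_mul h1 h2 (norm_nonneg _)
  positivity

lemma core (P : ℂ[X]) (hP : P ≠ 0) (h0 : P.coeff 0 = 0) (l : List (ℚ × ℚ))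
    {η : ℝ} (hη : 0 < η) :
    ∃ n : ℕ, Summable (fun j => ‖((Bw w)^[n] (fun i => P.eval (xv w C hg i))) j
        - P.coeff P.natTrailingDegree * toVec l j‖) ∧
      (∑' j : ℕ, ‖((Bw w)^[n] (fun i => P.eval (xv w C hg i))) j
        - P.coeff P.natTrailingDegree * toVec l j‖) < η := by
  have hC := hg.1
  have hC0 : (0:ℝ) < C := lt_of_lt_of_le one_pos hC
  set m := P.natTrailingDegree with hmdef
  have hm1 : 1 ≤ m := by
    rcases Nat.eq_zero_or_pos m with h | h
    · exfalso
      have : P.trailingCoeff ≠ 0 := Polynomial.trailingCoeff_nonzero_iff_nonzero.2 hP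
      rw [Polynomial.trailingCoeff, ← hmdef, h] at this
      exact this h0
    · omega
  set Lf := l.length with hLf
  set Yf : ℝ := 1 + ∑ j ∈ Finset.range Lf, ‖toVec l j‖ with hYf
  have hYf1 : 1 ≤ Yf := by
    have : 0 ≤ ∑ j ∈ Finset.range Lf, ‖toVec l j‖ := Finset.sum_nonneg fun j _ => norm_nonneg _
    rw [hYf]; linarith
  set A : ℝ := CP P * (Lf * Yf + 1) with hA
  have hA0 : 0 < A := by
    have := CP_pos P
    have : (0:ℝ) ≤ (Lf:ℝ) * Yf := by positivity
    nlinarith [CP_pos P]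
  -- choose K with A * 2⁻¹^(K+1) < η
  obtain ⟨K, hK⟩ : ∃ K : ℕ, A * (2:ℝ)⁻¹^(K+1) < η := by
    have h2 : Tendsto (fun K : ℕ => A * (2:ℝ)⁻¹^(K+1)) atTop (𝓝 (A * 0)) := by
      apply Tendsto.const_mul
      have h3 := tendsto_pow_atTop_nhds_zero_of_lt_one (by norm_num : (0:ℝ) ≤ 2⁻¹)
        (by norm_num : (2:ℝ)⁻¹ < 1)
      exact h3.comp (tendsto_add_atTop_nat 1)
    rw [mul_zero] at h2
    exact (h2.eventually_lt_const hη).exists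
  obtain ⟨k, hkK, hek⟩ := enum_spec (m - 1, l) K
  -- identifications
  have hmk : mk k = m := by simp only [_root_.mk, hek]; omega
  have hlk : lk k = l := by simp only [_root_.lk, hek]
  have hLk : Lk k = Lf := by rw [Lk, hlk]
  have hyk : yk k = toVec l := by rw [yk, hlk]
  have hYb : Yb k = Yf := by rw [Yb, hLk, hyk]
  refine ⟨ns w C hg k, ?_⟩
  set n := ns w C hg k with hn
  set F : ℕ → ℝ := fun j => ‖((Bw w)^[n] (fun i => P.eval (xv w C hg i))) j
    - P.coeff m * toVec l j‖ with hF
  set g : ℕ → ℝ := fun j => if j < Lf then CP P * Yf * dl w C hg k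
    else C ^ n * (CP P * ‖xv w C hg (j + n)‖) with hg2
  have hFg : ∀ j, F j ≤ g j := by
    intro j
    rw [hF, hg2]
    by_cases hj : j < Lf
    · simp only [if_pos hj]
      have := block_coord w C hg P hP h0 hmk (hLk ▸ hj)
      rw [hyk, hYb] at this
      exact this
    · simp only [if_neg hj]
      push_neg at hj
      rw [toVec_eq_zero l (hLf ▸ hj), mul_zero, sub_zero]
      exact out_coord w C hg P h0 k j
  have hF0 : ∀ j, 0 ≤ F j := fun j => norm_nonneg _
  have hgs : Summable g := by
    rw [← summable_nat_add_iff (f := g) Lf]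
    have : ∀ j, g (j + Lf) = (C ^ n * CP P) * ‖xv w C hg ((j + Lf) + n)‖ := by
      intro j
      rw [hg2]
      simp only [if_neg (by omega : ¬ (j + Lf < Lf))]
      ring
    apply Summable.congr _ (fun j => (this j).symm)
    have hs1 : Summable (fun j => ‖xv w C hg (j + (Lf + n))‖) :=
      (summable_nat_add_iff (f := fun r => ‖xv w C hg r‖) (Lf + n)).2 (xv_summable w C hg)
    have hs2 := hs1.mul_left (C ^ n * CP P)
    apply hs2.congr
    intro j
    rw [add_assoc]
  have hFs : Summable F := Summable.of_nonneg_of_le hF0 hFg hgs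
  refine ⟨hFs, ?_⟩
  have htsum : ∑' j, F j ≤ ∑' j, g j := Summable.tsum_le_tsum hFg hFs hgs
  -- compute tsum g
  have hsplit : ∑ j ∈ Finset.range Lf, g j + ∑' j, g (j + Lf) = ∑' j, g j :=
    Summable.sum_add_tsum_nat_add Lf hgs
  have hhead : ∑ j ∈ Finset.range Lf, g j = Lf * (CP P * Yf * dl w C hg k) := by
    rw [hg2]
    rw [Finset.sum_ite_of_true]
    · rw [Finset.sum_const, Finset.card_range, nsmul_eq_mul]
    · intro j hj
      exact Finset.mem_range.1 hj
  have htail : ∑' j, g (j + Lf) ≤ CP P * (2:ℝ)⁻¹^(k+1) := by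
    have heq : ∀ j, g (j + Lf) = (C ^ n * CP P) * ‖xv w C hg (j + (Lf + n))‖ := by
      intro j
      rw [hg2]
      simp only [if_neg (by omega : ¬ (j + Lf < Lf))]
      rw [add_assoc]
      ring
    rw [tsum_congr heq, tsum_mul_left]
    have h1 : ∑' j, ‖xv w C hg (j + (Lf + n))‖ ≤ (2:ℝ)⁻¹^(k+1) * (C⁻¹)^n := by
      have := xv_tsum_tail w C hg k
      rw [← hn] at this
      rw [show Lf + n = n + Lk k by rw [hLk]; omega]
      exact this
    calc (C ^ n * CP P) * ∑' j, ‖xv w C hg (j + (Lf + n))‖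
        ≤ (C ^ n * CP P) * ((2:ℝ)⁻¹^(k+1) * (C⁻¹)^n) := by
          apply mul_le_mul_of_nonneg_left h1
          have := CP_pos P
          positivity
      _ = CP P * (2:ℝ)⁻¹^(k+1) * (C ^ n * (C⁻¹)^n) := by ring
      _ = CP P * (2:ℝ)⁻¹^(k+1) := by
          rw [← mul_pow, mul_inv_cancel₀ (ne_of_gt hC0), one_pow, mul_one]
  have hdlk : dl w C hg k ≤ (2:ℝ)⁻¹^(k+1) := by
    apply le_trans (dlt_le C k _)
    have h1 : ((Lk k : ℝ)+1)⁻¹ ≤ 1 :=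
      inv_le_one_of_one_le₀ (by linarith [Nat.cast_nonneg (α := ℝ) (Lk k)])
    have h2 : ((C:ℝ)⁻¹)^(pr w C hg k) ≤ 1 := by
      apply pow_le_one₀ (by positivity) (inv_le_one_of_one_le₀ hC)
    calc (2:ℝ)⁻¹^(k+1) * ((Lk k : ℝ)+1)⁻¹ * (C⁻¹)^(pr w C hg k)
        ≤ (2:ℝ)⁻¹^(k+1) * 1 * 1 := by
          apply mul_le_mul (mul_le_mul le_rfl h1 (by positivity) (by positivity)) h2
            (by positivity) (by positivity)
      _ = (2:ℝ)⁻¹^(k+1) := by ring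
  have hfinal : ∑' j, g j ≤ A * (2:ℝ)⁻¹^(k+1) := by
    rw [← hsplit, hhead]
    have h1 : (Lf:ℝ) * (CP P * Yf * dl w C hg k) ≤ (Lf:ℝ) * (CP P * Yf) * (2:ℝ)⁻¹^(k+1) := by
      have := CP_pos P
      have h2 : (0:ℝ) ≤ (Lf:ℝ) * (CP P * Yf) := by positivity
      calc (Lf:ℝ) * (CP P * Yf * dl w C hg k) = ((Lf:ℝ) * (CP P * Yf)) * dl w C hg k := by ring
        _ ≤ ((Lf:ℝ) * (CP P * Yf)) * (2:ℝ)⁻¹^(k+1) := mul_le_mul_of_nonneg_left hdlk h2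
    have := htail
    rw [hA]
    push_cast
    nlinarith [htail, h1]
  have hmono : A * (2:ℝ)⁻¹^(k+1) ≤ A * (2:ℝ)⁻¹^(K+1) := by
    apply mul_le_mul_of_nonneg_left _ (le_of_lt hA0)
    apply pow_le_pow_of_le_one (by norm_num) (by norm_num)
    omega
  calc ∑' j, F j ≤ ∑' j, g j := htsum
    _ ≤ A * (2:ℝ)⁻¹^(k+1) := hfinal
    _ ≤ A * (2:ℝ)⁻¹^(K+1) := hmono
    _ < η := hK

end CONSTR

lemma trailing_ne {P : ℂ[X]} (hP : P ≠ 0) : P.coeff P.natTrailingDegree ≠ 0 := by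
  have : P.trailingCoeff ≠ 0 := Polynomial.trailingCoeff_nonzero_iff_nonzero.2 hP
  exact this

lemma memlp_shifted {w : ℕ → ℂ} {C : ℝ} (hC2 : 1 ≤ C) (hb2 : ∀ n, ‖w n‖ ≤ C) {p : ℝ} (hp : 1 ≤ p) {z : ℕ → ℂ} (hz : Memlp p z) (n : ℕ) :
    Memlp p ((Bw w)^[n] z) := by
  have hC := hC2
  have hC0 : (0:ℝ) < C := lt_of_lt_of_le one_pos hC
  have hσ : Summable (fun j => ‖z (j + n)‖ ^ p) :=
    (summable_nat_add_iff (f := fun j => ‖z j‖ ^ p) n).2 hz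
  rw [Memlp]
  apply Summable.of_nonneg_of_le (fun j => Real.rpow_nonneg (norm_nonneg _) p)
    (f := fun j => (C ^ n) ^ p * ‖z (j + n)‖ ^ p) _ (hσ.mul_left _)
  intro j
  rw [Bw_iter]
  rw [norm_mul]
  have h1 : ‖piw w j (j + n)‖ * ‖z (j + n)‖ ≤ C ^ n * ‖z (j + n)‖ := by
    apply mul_le_mul_of_nonneg_right _ (norm_nonneg _)
    have := prod_norm_le hC hb2 j (j + n)
    simpa using this
  calc (‖piw w j (j + n)‖ * ‖z (j + n)‖) ^ p ≤ (C ^ n * ‖z (j + n)‖) ^ p :=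
        Real.rpow_le_rpow (by positivity) h1 (by linarith)
    _ = (C ^ n) ^ p * ‖z (j + n)‖ ^ p := Real.mul_rpow (by positivity) (norm_nonneg _)

lemma memlp_sub {p : ℝ} (hp : 1 ≤ p) {a b : ℕ → ℂ} (ha : Memlp p a) (hb : Memlp p b) :
    Summable (fun j => ‖a j - b j‖ ^ p) := by
  apply Summable.of_nonneg_of_le (fun j => Real.rpow_nonneg (norm_nonneg _) p)
    (f := fun j => (2:ℝ) ^ p * (‖a j‖ ^ p + ‖b j‖ ^ p)) _ ((ha.add hb).mul_left _)
  intro j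
  calc ‖a j - b j‖ ^ p ≤ (‖a j‖ + ‖b j‖) ^ p :=
        Real.rpow_le_rpow (norm_nonneg _) (norm_sub_le _ _) (by linarith)
    _ ≤ (2:ℝ) ^ p * (‖a j‖ ^ p + ‖b j‖ ^ p) :=
        add_rpow_le (norm_nonneg _) (norm_nonneg _) hp


section ASSEMBLE
variable (w : ℕ → ℂ) (C : ℝ) (hg : GoodW w C)

include hg in
lemma memlp_eval_xv {p : ℝ} (hp : 1 ≤ p) (P : ℂ[X]) (h0 : P.coeff 0 = 0) :
    Memlp p (fun i => P.eval (xv w C hg i)) := by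
  have hCP := CP_pos P
  rw [Memlp]
  apply Summable.of_nonneg_of_le (fun j => Real.rpow_nonneg (norm_nonneg _) p)
    (f := fun i => (CP P) ^ p * ‖xv w C hg i‖) _ ((xv_summable w C hg).mul_left _)
  intro i
  have h1 : ‖P.eval (xv w C hg i)‖ ≤ CP P * ‖xv w C hg i‖ :=
    eval_norm_le h0 (xv_norm_le_one w C hg i)
  calc ‖P.eval (xv w C hg i)‖ ^ p ≤ (CP P * ‖xv w C hg i‖) ^ p :=
        Real.rpow_le_rpow (norm_nonneg _) h1 (by linarith)
    _ = (CP P) ^ p * ‖xv w C hg i‖ ^ p := Real.mul_rpow (le_of_lt hCP) (norm_nonneg _)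
    _ ≤ (CP P) ^ p * ‖xv w C hg i‖ := by
        apply mul_le_mul_of_nonneg_left
          (rpow_le_self (norm_nonneg _) (xv_norm_le_one w C hg i) hp)
          (Real.rpow_nonneg (le_of_lt hCP) p)

include hg in
lemma memc0_eval_xv (P : ℂ[X]) (h0 : P.coeff 0 = 0) :
    Memc0 (fun i => P.eval (xv w C hg i)) := by
  have h1 : Tendsto (fun i => CP P * ‖xv w C hg i‖) atTop (𝓝 0) := by
    have := (xv_summable w C hg).tendsto_atTop_zero
    simpa using this.const_mul (CP P)
  rw [Memc0, tendsto_zero_iff_norm_tendsto_zero]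
  apply squeeze_zero (fun i => norm_nonneg _) _ h1
  intro i
  exact eval_norm_le h0 (xv_norm_le_one w C hg i)

include hg in
lemma hclp_eval_xv {p : ℝ} (hp : 1 ≤ p) (P : ℂ[X]) (hP : P ≠ 0) (h0 : P.coeff 0 = 0) :
    HClp p w (fun i => P.eval (xv w C hg i)) := by
  have hp0 : (0:ℝ) < p := by linarith
  set c : ℂ := P.coeff P.natTrailingDegree with hc
  have hcne : c ≠ 0 := trailing_ne hP
  set y0 : ℕ → ℂ := fun i => P.eval (xv w C hg i) with hy0
  refine ⟨memlp_eval_xv w C hg hp P h0, ?_⟩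
  intro z hz ε hε
  set E : ℝ := min ε 1 with hE
  have hE0 : 0 < E := lt_min hε one_pos
  have hE1 : E ≤ 1 := min_le_right _ _
  have hEp : 0 < E ^ p := Real.rpow_pos_of_pos hE0 p
  set B2 : ℝ := (2:ℝ) ^ p with hB2
  have hB20 : 0 < B2 := Real.rpow_pos_of_pos two_pos p
  set ε₂ : ℝ := E ^ p / (8 * B2) with hε₂
  have hε₂0 : 0 < ε₂ := by positivity
  obtain ⟨L, hL⟩ : ∃ L : ℕ, ∑' j, ‖z (j + L)‖ ^ p < ε₂ := by
    have h1 := (tendsto_sum_nat_add (fun j => ‖z j‖ ^ p)).eventually_lt_const hε₂0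
    obtain ⟨L, hL2⟩ := eventually_atTop.1 h1
    exact ⟨L, hL2 L le_rfl⟩
  set β : ℝ := min 1 (E ^ p / (2 * (L + 1))) with hβ
  have hβ0 : 0 < β := lt_min one_pos (by positivity)
  have hβ1 : β ≤ 1 := min_le_left _ _
  set η : ℝ := min (β / 2) (E ^ p / (8 * B2)) with hη
  have hη0 : 0 < η := lt_min (by positivity) (by positivity)
  have hη1 : η ≤ 1 := le_trans (min_le_left _ _) (by linarith)
  obtain ⟨l, hlen, hlapp⟩ := list_approx z c hcne L (show (0:ℝ) < β / 2 by positivity)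
  obtain ⟨n, hsum, htsum⟩ := core w C hg P hP h0 l hη0
  set F0 : ℕ → ℝ := fun j => ‖((Bw w)^[n] y0) j - c * toVec l j‖ with hF0
  have hF0j : ∀ j, F0 j ≤ η :=
    fun j => le_trans (Summable.le_tsum hsum j (fun i _ => norm_nonneg _)) (le_of_lt htsum)
  refine ⟨n, ?_⟩
  have hBn : Memlp p ((Bw w)^[n] y0) :=
    memlp_shifted hg.1 hg.2.1 hp (memlp_eval_xv w C hg hp P h0) n
  have hG : Summable (fun j => ‖((Bw w)^[n] y0) j - z j‖ ^ p) := memlp_sub hp hBn hz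
  set G : ℕ → ℝ := fun j => ‖((Bw w)^[n] y0) j - z j‖ ^ p with hGdef
  -- head bound
  have hhead : ∀ j < L, G j ≤ β := by
    intro j hj
    have h1 : ‖((Bw w)^[n] y0) j - z j‖ ≤ F0 j + ‖c * toVec l j - z j‖ :=
      norm_sub_le_norm_sub_add_norm_sub (((Bw w)^[n] y0) j) (c * toVec l j) (z j)
    have h2 : ‖((Bw w)^[n] y0) j - z j‖ ≤ β := by
      have := hlapp j hj
      have hη2 : η ≤ β / 2 := min_le_left _ _
      have := hF0j j
      linarith
    calc G j ≤ β ^ p := Real.rpow_le_rpow (norm_nonneg _) h2 (le_of_lt hp0)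
      _ ≤ β := rpow_le_self (le_of_lt hβ0) hβ1 hp
  -- tail bound pieces
  have hT1 : ∑' j, ‖((Bw w)^[n] y0) (j + L)‖ ^ p ≤ η := by
    have hs1 : Summable (fun j => ‖((Bw w)^[n] y0) (j + L)‖ ^ p) :=
      (summable_nat_add_iff (f := fun j => ‖((Bw w)^[n] y0) j‖ ^ p) L).2 hBn
    have heq : ∀ j, ‖((Bw w)^[n] y0) (j + L)‖ = F0 (j + L) := by
      intro j
      show _ = ‖((Bw w)^[n] y0) (j + L) - c * toVec l (j + L)‖
      rw [toVec_eq_zero l (by omega : l.length ≤ j + L), mul_zero, sub_zero]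
    have hs2 : Summable (fun j => F0 (j + L)) :=
      (summable_nat_add_iff (f := F0) L).2 hsum
    have h1 : ∑' j, ‖((Bw w)^[n] y0) (j + L)‖ ^ p ≤ ∑' j, F0 (j + L) := by
      apply Summable.tsum_le_tsum _ hs1 hs2
      intro j
      rw [← heq j]
      exact rpow_le_self (norm_nonneg _) (by rw [heq j]; exact le_trans (hF0j _) hη1) hp
    have h2 : ∑' j, F0 (j + L) ≤ ∑' j, F0 j := by
      have := Summable.sum_add_tsum_nat_add (f := F0) L hsum
      have hhd : 0 ≤ ∑ i ∈ Finset.range L, F0 i := Finset.sum_nonneg fun i _ => norm_nonneg _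
      linarith
    linarith [le_of_lt htsum]
  have htailG : ∑' j, G (j + L) ≤ B2 * (η + ε₂) := by
    have hsG : Summable (fun j => G (j + L)) := (summable_nat_add_iff (f := G) L).2 hG
    have hs1 : Summable (fun j => ‖((Bw w)^[n] y0) (j + L)‖ ^ p) :=
      (summable_nat_add_iff (f := fun j => ‖((Bw w)^[n] y0) j‖ ^ p) L).2 hBn
    have hs2 : Summable (fun j => ‖z (j + L)‖ ^ p) :=
      (summable_nat_add_iff (f := fun j => ‖z j‖ ^ p) L).2 hz
    have h1 : ∑' j, G (j + L)
        ≤ ∑' j, (2:ℝ) ^ p * (‖((Bw w)^[n] y0) (j + L)‖ ^ p + ‖z (j + L)‖ ^ p) := by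
      apply Summable.tsum_le_tsum _ hsG ((hs1.add hs2).mul_left _)
      intro j
      calc G (j + L) ≤ (‖((Bw w)^[n] y0) (j + L)‖ + ‖z (j + L)‖) ^ p :=
            Real.rpow_le_rpow (norm_nonneg _) (norm_sub_le _ _) (le_of_lt hp0)
        _ ≤ (2:ℝ) ^ p * (‖((Bw w)^[n] y0) (j + L)‖ ^ p + ‖z (j + L)‖ ^ p) :=
            add_rpow_le (norm_nonneg _) (norm_nonneg _) hp
    rw [tsum_mul_left, Summable.tsum_add hs1 hs2] at h1
    have h2 : ∑' j, ‖((Bw w)^[n] y0) (j + L)‖ ^ p + ∑' j, ‖z (j + L)‖ ^ p ≤ η + ε₂ :=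
      add_le_add hT1 (le_of_lt hL)
    calc ∑' j, G (j + L) ≤ (2:ℝ)^p * (∑' j, ‖((Bw w)^[n] y0) (j + L)‖ ^ p
          + ∑' j, ‖z (j + L)‖ ^ p) := h1
      _ ≤ B2 * (η + ε₂) := by
          rw [hB2]
          apply mul_le_mul_of_nonneg_left h2 (le_of_lt hB20)
  -- combine
  have htotal : ∑' j, G j < E ^ p := by
    have hsplit := Summable.sum_add_tsum_nat_add (f := G) L hG
    have hheadsum : ∑ j ∈ Finset.range L, G j ≤ L * β := by
      calc ∑ j ∈ Finset.range L, G j ≤ ∑ _j ∈ Finset.range L, β := by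
            apply Finset.sum_le_sum
            intro j hj
            exact hhead j (Finset.mem_range.1 hj)
        _ = L * β := by rw [Finset.sum_const, Finset.card_range, nsmul_eq_mul]
    have hLβ : (L:ℝ) * β ≤ E ^ p / 2 := by
      have h1 : β ≤ E ^ p / (2 * (L + 1)) := min_le_right _ _
      have h2 : (L:ℝ) * β ≤ (L:ℝ) * (E ^ p / (2 * (L + 1))) :=
        mul_le_mul_of_nonneg_left h1 (Nat.cast_nonneg _)
      have h3 : (L:ℝ) * (E ^ p / (2 * (L + 1))) ≤ E ^ p / 2 := by
        calc (L:ℝ) * (E ^ p / (2 * (L + 1))) = E ^ p * ((L:ℝ) / (2 * ((L:ℝ) + 1))) := by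
              push_cast; ring
          _ ≤ E ^ p * (1/2) := by
              apply mul_le_mul_of_nonneg_left _ (le_of_lt hEp)
              rw [div_le_div_iff₀ (by positivity) (by norm_num)]
              linarith [Nat.cast_nonneg (α := ℝ) L]
          _ = E ^ p / 2 := by ring
      linarith
    have hηb : η ≤ E ^ p / (8 * B2) := min_le_right _ _
    have h4 : B2 * (η + ε₂) ≤ E ^ p / 4 := by
      have : η + ε₂ ≤ 2 * (E ^ p / (8 * B2)) := by rw [hε₂]; linarith
      calc B2 * (η + ε₂) ≤ B2 * (2 * (E ^ p / (8 * B2))) :=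
            mul_le_mul_of_nonneg_left this (le_of_lt hB20)
        _ = E ^ p / 4 := by field_simp; ring
    have := htailG
    linarith
  -- conclude
  rw [lpDist]
  have h5 : (∑' j, G j) ^ (1/p) < (E ^ p) ^ (1/p) := by
    apply Real.rpow_lt_rpow (tsum_nonneg fun j => Real.rpow_nonneg (norm_nonneg _) p)
      htotal (by positivity)
  have h6 : (E ^ p) ^ (1/p) = E := by
    rw [← Real.rpow_mul (le_of_lt hE0), mul_one_div, div_self (ne_of_gt hp0), Real.rpow_one]
  calc (∑' j, ‖((Bw w)^[n] y0) j - z j‖ ^ p) ^ (1/p) = (∑' j, G j) ^ (1/p) := rfl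
    _ < E := h6 ▸ h5
    _ ≤ ε := min_le_left _ _

include hg in
lemma hcc0_eval_xv (P : ℂ[X]) (hP : P ≠ 0) (h0 : P.coeff 0 = 0) :
    HCc0 w (fun i => P.eval (xv w C hg i)) := by
  set c : ℂ := P.coeff P.natTrailingDegree with hc
  have hcne : c ≠ 0 := trailing_ne hP
  set y0 : ℕ → ℂ := fun i => P.eval (xv w C hg i) with hy0
  refine ⟨memc0_eval_xv w C hg P h0, ?_⟩
  intro z hz ε hε
  obtain ⟨L, hL⟩ : ∃ L : ℕ, ∀ j, L ≤ j → ‖z j‖ < ε / 2 := by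
    have h1 : ∀ᶠ j in atTop, ‖z j‖ < ε / 2 := by
      have := hz
      rw [Memc0, tendsto_zero_iff_norm_tendsto_zero] at this
      exact this.eventually_lt_const (by positivity)
    obtain ⟨L, hL⟩ := eventually_atTop.1 h1
    exact ⟨L, hL⟩
  obtain ⟨l, hlen, hlapp⟩ := list_approx z c hcne L (show (0:ℝ) < ε/4 by positivity)
  obtain ⟨n, hsum, htsum⟩ := core w C hg P hP h0 l (show (0:ℝ) < ε/4 by positivity)
  refine ⟨n, ?_⟩
  intro j
  have hF0j : ‖((Bw w)^[n] y0) j - c * toVec l j‖ < ε / 4 :=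
    lt_of_le_of_lt (Summable.le_tsum hsum j (fun i _ => norm_nonneg _)) htsum
  rcases lt_or_ge j L with hj | hj
  · have h1 := hlapp j hj
    calc ‖((Bw w)^[n] y0) j - z j‖
        ≤ ‖((Bw w)^[n] y0) j - c * toVec l j‖ + ‖c * toVec l j - z j‖ :=
          norm_sub_le_norm_sub_add_norm_sub (((Bw w)^[n] y0) j) (c * toVec l j) (z j)
      _ < ε/4 + ε/4 := by linarith
      _ ≤ ε := by linarith
  · have h2 : toVec l j = 0 := toVec_eq_zero l (by omega)
    have h3 : ‖((Bw w)^[n] y0) j‖ < ε / 4 := by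
      rw [h2, mul_zero, sub_zero] at hF0j
      exact hF0j
    calc ‖((Bw w)^[n] y0) j - z j‖ ≤ ‖((Bw w)^[n] y0) j‖ + ‖z j‖ := norm_sub_le _ _
      _ < ε/4 + ε/2 := add_lt_add h3 (hL j hj)
      _ ≤ ε := by linarith

include hg in
lemma xv_ne_zero : xv w C hg ≠ 0 := by
  obtain ⟨k, _, hek⟩ := enum_spec (0, [(1,0)]) 0
  have hlk : lk k = [(1,0)] := by simp only [lk, hek]
  have hLk : Lk k = 1 := by rw [Lk, hlk]; rfl
  have hyk : yk k 0 = 1 := by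
    rw [yk, hlk, toVec]
    norm_num
  have h1 := xv_block_pow w C hg (k := k) (j := 0) (by omega)
  rw [hyk] at h1
  intro hx
  have hmk : mk k ≠ 0 := Nat.succ_ne_zero _
  rw [hx] at h1
  rw [Pi.zero_apply, zero_pow hmk, mul_zero] at h1
  exact one_ne_zero h1.symm

noncomputable def Aalg : NonUnitalSubalgebra ℂ (ℕ → ℂ) where
  carrier := {y | ∃ P : ℂ[X], P.coeff 0 = 0 ∧ y = fun i => P.eval (xv w C hg i)}
  add_mem' := by
    rintro a b ⟨P, hP, rfl⟩ ⟨Q, hQ, rfl⟩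
    exact ⟨P + Q, by simp [hP, hQ], by funext i; simp⟩
  mul_mem' := by
    rintro a b ⟨P, hP, rfl⟩ ⟨Q, hQ, rfl⟩
    exact ⟨P * Q, by simp [Polynomial.mul_coeff_zero, hP, hQ], by funext i; simp⟩
  zero_mem' := ⟨0, by simp, by funext i; simp⟩
  smul_mem' := by
    rintro d a ⟨P, hP, rfl⟩
    refine ⟨d • P, by simp [hP], by funext i; simp⟩

lemma mem_Aalg {y : ℕ → ℂ} (hy : y ∈ Aalg w C hg) :
    ∃ P : ℂ[X], P.coeff 0 = 0 ∧ y = fun i => P.eval (xv w C hg i) := hy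

lemma xv_mem_Aalg : xv w C hg ∈ Aalg w C hg :=
  ⟨Polynomial.X, by simp, by funext i; simp⟩

end ASSEMBLE

lemma bounded_of_eventually {x : ℕ → ℂ} {N : ℕ} (hN : ∀ n, N ≤ n → ‖x n‖ ≤ 1) :
    ∃ M : ℝ, 1 ≤ M ∧ ∀ n, ‖x n‖ ≤ M := by
  have hs : (0:ℝ) ≤ ∑ i ∈ Finset.range N, ‖x i‖ := Finset.sum_nonneg fun i _ => norm_nonneg _
  refine ⟨1 + ∑ i ∈ Finset.range N, ‖x i‖, by linarith, ?_⟩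
  intro n
  rcases lt_or_ge n N with h | h
  · have := Finset.single_le_sum (f := fun i => ‖x i‖) (fun i _ => norm_nonneg _)
      (Finset.mem_range.2 h)
    linarith
  · have := hN n h
    linarith

lemma norm_le_one_of_rpow {t p : ℝ} (hp : 1 ≤ p) (h0 : 0 ≤ t) (h : t ^ p < 1) : t ≤ 1 := by
  by_contra hc
  push_neg at hc
  have h1 : (1:ℝ) ≤ t ^ p := by
    calc (1:ℝ) = 1 ^ p := (Real.one_rpow p).symm
      _ ≤ t ^ p := Real.rpow_le_rpow (by norm_num) (le_of_lt hc) (by linarith)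
  linarith

lemma bounded_of_memlp {p : ℝ} (hp : 1 ≤ p) {x : ℕ → ℂ} (hx : Memlp p x) :
    ∃ M : ℝ, 1 ≤ M ∧ ∀ n, ‖x n‖ ≤ M := by
  have h1 : Tendsto (fun n => ‖x n‖ ^ p) atTop (𝓝 0) := hx.tendsto_atTop_zero
  obtain ⟨N, hN⟩ := eventually_atTop.1 (h1.eventually_lt_const one_pos)
  exact bounded_of_eventually fun n hn =>
    norm_le_one_of_rpow hp (norm_nonneg _) (hN n hn)

lemma bounded_of_memc0 {x : ℕ → ℂ} (hx : Memc0 x) :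
    ∃ M : ℝ, 1 ≤ M ∧ ∀ n, ‖x n‖ ≤ M := by
  rw [Memc0, tendsto_zero_iff_norm_tendsto_zero] at hx
  obtain ⟨N, hN⟩ := eventually_atTop.1 (hx.eventually_lt_const one_pos)
  exact bounded_of_eventually fun n hn => le_of_lt (hN n hn)

lemma Wn_zero (w : ℕ → ℂ) : Wn w 0 = 1 := by simp [Wn]

lemma norm_Bw_iter_zero (w : ℕ → ℂ) (x : ℕ → ℂ) (n : ℕ) :
    ‖((Bw w)^[n] x) 0‖ = Wn w n * ‖x n‖ := by
  rw [Bw_iter, norm_mul]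
  have h := norm_piw_mul (w := w) 0 (0 + n) (by omega)
  rw [Wn_zero, mul_one] at h
  rw [h]
  norm_num

lemma exists_Wn_ge_lp {w : ℕ → ℂ} {C : ℝ} (hC : 1 ≤ C) (hb : ∀ n, ‖w n‖ ≤ C)
    (hw : ∀ n : ℕ, 1 ≤ n → w n ≠ 0) {p : ℝ} (hp : 1 ≤ p) {x : ℕ → ℂ} (hx : HClp p w x)
    (R : ℝ) : ∃ n, R ≤ Wn w n := by
  have hp0 : (0:ℝ) < p := by linarith
  obtain ⟨M, hM1, hM⟩ := bounded_of_memlp hp hx.1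
  set a : ℝ := R * M + M + 1 with ha
  set y : ℕ → ℂ := fun j => if j = 0 then (a : ℂ) else 0 with hy
  have hyl : Memlp p y := by
    rw [Memlp]
    apply summable_of_ne_finset_zero (s := {0})
    intro j hj
    simp only [Finset.mem_singleton] at hj
    rw [hy]
    simp only [if_neg hj, norm_zero]
    exact Real.zero_rpow (ne_of_gt hp0)
  obtain ⟨n, hn⟩ := hx.2 y hyl 1 one_pos
  set d : ℕ → ℝ := fun j => ‖((Bw w)^[n] x) j - y j‖ ^ p with hd
  have hds : Summable d := memlp_sub hp (memlp_shifted hC hb hp hx.1 n) hyl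
  have hS : ∑' j, d j < 1 := by
    by_contra hcon
    push_neg at hcon
    have h2 : (1:ℝ) ≤ (∑' j, d j) ^ (1/p) := by
      calc (1:ℝ) = 1 ^ (1/p) := (Real.one_rpow _).symm
        _ ≤ (∑' j, d j) ^ (1/p) := Real.rpow_le_rpow (by norm_num) hcon (by positivity)
    rw [lpDist] at hn
    linarith
  have hd0 : d 0 < 1 :=
    lt_of_le_of_lt (Summable.le_tsum hds 0 (fun j _ => Real.rpow_nonneg (norm_nonneg _) p)) hS
  have hd00 : ‖((Bw w)^[n] x) 0 - y 0‖ ^ p < 1 := hd0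
  have hy0 : y 0 = (a:ℂ) := by simp [hy]
  rw [hy0] at hd00
  have h3 : ‖((Bw w)^[n] x) 0 - (a:ℂ)‖ ≤ 1 := norm_le_one_of_rpow hp (norm_nonneg _) hd00
  have h4 : a - 1 ≤ ‖((Bw w)^[n] x) 0‖ := by
    have h6 := abs_norm_sub_norm_le (((Bw w)^[n] x) 0) (a:ℂ)
    have h62 := (abs_le.1 h6).1
    have h7 : a ≤ ‖(a:ℂ)‖ := by
      rw [Complex.norm_real]
      exact le_abs_self a
    linarith
  rw [norm_Bw_iter_zero] at h4
  have h8 : Wn w n * ‖x n‖ ≤ Wn w n * M :=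
    mul_le_mul_of_nonneg_left (hM n) (le_of_lt (Wn_pos hw n))
  have h9 : R * M ≤ Wn w n * M := by
    rw [ha] at h4
    linarith
  have hM0 : (0:ℝ) < M := by linarith
  exact ⟨n, le_of_mul_le_mul_right h9 hM0⟩

lemma exists_Wn_ge_c0 {w : ℕ → ℂ} (hw : ∀ n : ℕ, 1 ≤ n → w n ≠ 0)
    {x : ℕ → ℂ} (hx : HCc0 w x) (R : ℝ) : ∃ n, R ≤ Wn w n := by
  obtain ⟨M, hM1, hM⟩ := bounded_of_memc0 hx.1
  set a : ℝ := R * M + M + 1 with ha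
  set y : ℕ → ℂ := fun j => if j = 0 then (a : ℂ) else 0 with hy
  have hyc : Memc0 y := by
    rw [Memc0]
    have hev : ∀ᶠ j in atTop, (fun _ => (0:ℂ)) j = y j :=
      eventually_atTop.2 ⟨1, fun j hj => by
        rw [hy]; simp only [if_neg (by omega : ¬ j = 0)]⟩
    exact Tendsto.congr' hev tendsto_const_nhds
  obtain ⟨n, hn⟩ := hx.2 y hyc 1 one_pos
  have h3 : ‖((Bw w)^[n] x) 0 - (a:ℂ)‖ < 1 := by
    have := hn 0
    simpa [hy] using this
  have h4 : a - 1 ≤ ‖((Bw w)^[n] x) 0‖ := by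
    have h6 := abs_norm_sub_norm_le (((Bw w)^[n] x) 0) (a:ℂ)
    have h62 := (abs_le.1 h6).1
    have h7 : a ≤ ‖(a:ℂ)‖ := by
      rw [Complex.norm_real]
      exact le_abs_self a
    linarith
  rw [norm_Bw_iter_zero] at h4
  have h8 : Wn w n * ‖x n‖ ≤ Wn w n * M :=
    mul_le_mul_of_nonneg_left (hM n) (le_of_lt (Wn_pos hw n))
  have h9 : R * M ≤ Wn w n * M := by
    rw [ha] at h4
    linarith
  have hM0 : (0:ℝ) < M := by linarith
  exact ⟨n, le_of_mul_le_mul_right h9 hM0⟩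

lemma shiftcond_of_unbounded {w : ℕ → ℂ} (hw : ∀ n : ℕ, 1 ≤ n → w n ≠ 0)
    (hU : ∀ R : ℝ, ∃ n, R ≤ Wn w n) : ShiftCond w := by
  have H : ∀ (R : ℝ) (N₀ : ℕ), ∃ n, N₀ ≤ n ∧ R ≤ Wn w n := by
    intro R N₀
    obtain ⟨n, hn⟩ := hU (max R (1 + ∑ i ∈ Finset.range N₀, Wn w i))
    refine ⟨n, ?_, le_trans (le_max_left _ _) hn⟩
    by_contra hc
    push_neg at hc
    have h1 : Wn w n ≤ ∑ i ∈ Finset.range N₀, Wn w i :=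
      Finset.single_le_sum (f := fun i => Wn w i) (fun i _ => le_of_lt (Wn_pos hw i))
        (Finset.mem_range.2 hc)
    have h2 : 1 + ∑ i ∈ Finset.range N₀, Wn w i ≤ Wn w n := le_trans (le_max_right _ _) hn
    linarith
  set f : ℕ → ℕ := fun k => Nat.rec (H 1 0).choose (fun k prev => (H (k+2) (prev+1)).choose) k
    with hf
  have hf0 : f 0 = (H 1 0).choose := rfl
  have hfs : ∀ k, f (k+1) = (H (k+2) (f k + 1)).choose := fun k => rfl
  have hmono : StrictMono f := by
    apply strictMono_nat_of_lt_succ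
    intro k
    have := (H ((k:ℝ)+2) (f k + 1)).choose_spec.1
    rw [hfs k]
    omega
  have hbound : ∀ k : ℕ, (k:ℝ) ≤ Wn w (f k) := by
    intro k
    cases k with
    | zero =>
        have := (H 1 0).choose_spec.2
        rw [hf0]
        push_cast
        linarith [this]
    | succ k =>
        have := (H ((k:ℝ)+2) (f k + 1)).choose_spec.2
        rw [hfs k]
        push_cast
        linarith [this]
  refine ⟨f, hmono, ?_⟩
  have h3 : Tendsto (fun k : ℕ => (k:ℝ)) atTop atTop := tendsto_natCast_atTop_atTop
  have h4 : ∀ k : ℕ, (k:ℝ) ≤ ∏ i ∈ Finset.Icc 1 (f k), ‖w i‖ := by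
    intro k
    rw [← Wn_eq_Icc]
    exact hbound k
  exact tendsto_atTop_mono h4 h3


/-- **Corollary.** On `ℓp` (`1 ≤ p < ∞`) or `c₀` with the coordinatewise product, for a bounded
weight `w`: `B_w` is hypercyclic ⟺ `B_w` supports a hypercyclic algebra ⟺ `|w₁⋯w_{n_k}| → ∞`
along some strictly increasing sequence `(n_k)`. -/
theorem weighted_shift_lp_c0_hypercyclic_algebra_iff
    (w : ℕ → ℂ) (hw : ∀ n : ℕ, 1 ≤ n → w n ≠ 0)
    (hb : ∃ C : ℝ, ∀ n, ‖w n‖ ≤ C) :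
    (∀ p : ℝ, 1 ≤ p →
      (((∃ x, HClp p w x) ↔ HCAlgLp p w) ∧ ((∃ x, HClp p w x) ↔ ShiftCond w))) ∧
    (((∃ x, HCc0 w x) ↔ HCAlgC0 w) ∧ ((∃ x, HCc0 w x) ↔ ShiftCond w)) := by
  obtain ⟨C0, hb0⟩ := hb
  set C := max C0 1 with hCdef
  have hC : (1:ℝ) ≤ C := le_max_right _ _
  have hbC : ∀ n, ‖w n‖ ≤ C := fun n => le_trans (hb0 n) (le_max_left _ _)
  have hAlgLp : ∀ p : ℝ, 1 ≤ p → ShiftCond w → HCAlgLp p w := by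
    intro p hp hsc
    have hg : GoodW w C := ⟨hC, hbC, hw, peak_of_shiftCond hC hbC hw hsc⟩
    refine ⟨Aalg w C hg, ?_, ⟨xv w C hg, xv_mem_Aalg w C hg, xv_ne_zero w C hg⟩, ?_⟩
    · intro x hx
      obtain ⟨P, hP0, rfl⟩ := mem_Aalg w C hg hx
      exact memlp_eval_xv w C hg hp P hP0
    · intro x hx hxne
      obtain ⟨P, hP0, rfl⟩ := mem_Aalg w C hg hx
      have hPne : P ≠ 0 := by
        rintro rfl
        apply hxne
        funext i
        simp
      exact hclp_eval_xv w C hg hp P hPne hP0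
  have hAlgC0 : ShiftCond w → HCAlgC0 w := by
    intro hsc
    have hg : GoodW w C := ⟨hC, hbC, hw, peak_of_shiftCond hC hbC hw hsc⟩
    refine ⟨Aalg w C hg, ?_, ⟨xv w C hg, xv_mem_Aalg w C hg, xv_ne_zero w C hg⟩, ?_⟩
    · intro x hx
      obtain ⟨P, hP0, rfl⟩ := mem_Aalg w C hg hx
      exact memc0_eval_xv w C hg P hP0
    · intro x hx hxne
      obtain ⟨P, hP0, rfl⟩ := mem_Aalg w C hg hx
      have hPne : P ≠ 0 := by
        rintro rfl
        apply hxne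
        funext i
        simp
      exact hcc0_eval_xv w C hg P hPne hP0
  have hLpSc : ∀ p : ℝ, 1 ≤ p → (∃ x, HClp p w x) → ShiftCond w := by
    rintro p hp ⟨x, hx⟩
    exact shiftcond_of_unbounded hw (exists_Wn_ge_lp hC hbC hw hp hx)
  have hC0Sc : (∃ x, HCc0 w x) → ShiftCond w := by
    rintro ⟨x, hx⟩
    exact shiftcond_of_unbounded hw (exists_Wn_ge_c0 hw hx)
  have hAlgExLp : ∀ p : ℝ, HCAlgLp p w → ∃ x, HClp p w x := by
    rintro p ⟨A, _, ⟨x, hxA, hxne⟩, hHC⟩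
    exact ⟨x, hHC x hxA hxne⟩
  have hAlgExC0 : HCAlgC0 w → ∃ x, HCc0 w x := by
    rintro ⟨A, _, ⟨x, hxA, hxne⟩, hHC⟩
    exact ⟨x, hHC x hxA hxne⟩
  refine ⟨fun p hp => ⟨⟨fun he => hAlgLp p hp (hLpSc p hp he), hAlgExLp p⟩,
    ⟨hLpSc p hp, fun hsc => hAlgExLp p (hAlgLp p hp hsc)⟩⟩,
    ⟨⟨fun he => hAlgC0 (hC0Sc he), hAlgExC0⟩,
    ⟨hC0Sc, fun hsc => hAlgExC0 (hAlgC0 hsc)⟩⟩⟩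
end

section
/- Every weighted backward shift B_w, where w = (wₙ)ₙ≥₁ is any sequence of nonzero complex numbers, acting on ω = ℂ^{ℕ₀} endowed with the coordinatewise product, supports a hypercyclic algebra. -/
open Filter Topology

noncomputable section
namespace HCA
open Finset Polynomial

/-! ### Iterates of the shift -/

def Wn (w : ℕ → ℂ) (n k : ℕ) : ℂ := ∏ i ∈ Finset.range n, w (k + i + 1)

theorem Bw_iter (w : ℕ → ℂ) : ∀ (n : ℕ) (y : ℕ → ℂ) (k : ℕ),
    (Bw w)^[n] y k = Wn w n k * y (k + n) := by
  intro n
  induction n with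
  | zero => intro y k; simp [Wn]
  | succ n ih =>
    intro y k
    rw [Function.iterate_succ_apply, ih (Bw w y) k]
    simp only [Bw, Wn, Finset.prod_range_succ]
    ring_nf

theorem Wn_ne_zero (w : ℕ → ℂ) (hw : ∀ n : ℕ, 1 ≤ n → w n ≠ 0) (n k : ℕ) :
    Wn w n k ≠ 0 :=
  Finset.prod_ne_zero_iff.mpr fun i _ => hw (k + i + 1) (by omega)


def etaA (s : ℕ) (T R ε : ℝ) : ℝ := min 1 ((ε / (4 * T * R)) ^ s)
def Xi (T R cd ε : ℝ) : ℝ := max 1 (4 * T * R / (cd * ε))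
def Mb (d : ℕ) (T R cd ε : ℝ) : ℝ := max 1 ((R + R * (Xi T R cd ε) ^ d) / cd)
def rFun (s d : ℕ) (R cd T ε : ℝ) : ℝ :=
  min (min (1 / (d + 1)) (cd * ε / (4 * d * T + 1)))
    (ε * etaA s T R ε / (4 * d * T * (Mb d T R cd ε) ^ d + 1))

theorem etaA_pos {s : ℕ} {T R ε : ℝ} (hT : 0 < T) (hR : 0 < R) (hε : 0 < ε) :
    0 < etaA s T R ε :=
  lt_min one_pos (pow_pos (div_pos hε (by positivity)) s)

theorem one_le_Mb {d : ℕ} {T R cd ε : ℝ} : 1 ≤ Mb d T R cd ε := le_max_left _ _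

theorem rFun_pos {s d : ℕ} {R cd T ε : ℝ} (hR : 1 ≤ R) (hcd : 0 < cd) (hT : 1 ≤ T)
    (hε : 0 < ε) : 0 < rFun s d R cd T ε := by
  have hT0 : (0:ℝ) < T := lt_of_lt_of_le one_pos hT
  have hR0 : (0:ℝ) < R := lt_of_lt_of_le one_pos hR
  have hA := etaA_pos (s := s) hT0 hR0 hε
  have hM : (0:ℝ) < Mb d T R cd ε := lt_of_lt_of_le one_pos one_le_Mb
  have hd0 : (0:ℝ) ≤ (d:ℝ) := Nat.cast_nonneg d
  exact lt_min (lt_min (by positivity) (by positivity)) (by positivity)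

theorem norm_polysum_le (F : Finset ℕ) (c : ℕ → ℂ) (ξ : ℂ) :
    ‖∑ i ∈ F, c i * ξ ^ i‖ ≤ ∑ i ∈ F, ‖c i‖ * ‖ξ‖ ^ i :=
  (norm_sum_le _ _).trans (le_of_eq (by simp [norm_mul, norm_pow]))

theorem sum_Ioc_pow_le {s d : ℕ} {G B : ℝ} (hB : 0 ≤ B)
    (h : ∀ i ∈ Finset.Ioc s d, G ^ i ≤ B) :
    ∑ i ∈ Finset.Ioc s d, G ^ i ≤ (d : ℝ) * B := by
  refine (Finset.sum_le_card_nsmul _ _ B h).trans ?_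
  rw [nsmul_eq_mul, Nat.card_Ioc]
  exact mul_le_mul_of_nonneg_right (by exact_mod_cast Nat.sub_le d s) hB

set_option maxHeartbeats 1000000 in
theorem solve (s d : ℕ) (hs : 1 ≤ s) (hsd : s ≤ d) (c : ℕ → ℂ)
    (hcs : c s = 1) (hc0 : ∀ i, i < s → c i = 0)
    (R cd T ε : ℝ) (hR : ∑ i ∈ Finset.range (d+1), ‖c i‖ ≤ R)
    (hcd : 0 < cd) (hcdle : cd ≤ ‖c d‖)
    (hT : 1 ≤ T) (hε : 0 < ε) (a W : ℂ) (hW : W ≠ 0) (ha : ‖a‖ ≤ T) :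
    ∃ ξ : ℂ, ‖W * (∑ i ∈ Finset.range (d+1), c i * ξ ^ i) - a‖
      + rFun s d R cd T ε * ‖W‖ * (∑ i ∈ Finset.Ioc s d, ‖ξ‖ ^ i) < ε := by
  have hd1 : 1 ≤ d := le_trans hs hsd
  have hs0 : s ≠ 0 := by omega
  have hd0 : d ≠ 0 := by omega
  have hT0 : (0:ℝ) < T := lt_of_lt_of_le one_pos hT
  have hR1 : 1 ≤ R := by
    refine le_trans ?_ hR
    calc (1:ℝ) = ‖c s‖ := by rw [hcs]; simp
    _ ≤ _ := Finset.single_le_sum (f := fun i => ‖c i‖) (fun i _ => norm_nonneg _)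
        (Finset.mem_range.mpr (by omega))
  have hR0 : (0:ℝ) < R := lt_of_lt_of_le one_pos hR1
  have hNcd : (0:ℝ) < ‖c d‖ := lt_of_lt_of_le hcd hcdle
  have hcdne : c d ≠ 0 := norm_ne_zero_iff.mp hNcd.ne'
  set r := rFun s d R cd T ε with hrdef
  have hr0 : 0 < r := rFun_pos hR1 hcd hT hε
  have hr1 : r ≤ 1 / (d + 1) := le_trans (min_le_left _ _) (min_le_left _ _)
  have hr2 : r ≤ cd * ε / (4 * d * T + 1) := le_trans (min_le_left _ _) (min_le_right _ _)
  have hr3 : r ≤ ε * etaA s T R ε / (4 * d * T * (Mb d T R cd ε) ^ d + 1) :=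
    min_le_right _ _
  set v := a / W with hvdef
  have hWv : W * v = a := by rw [hvdef]; field_simp
  have hWn : (0:ℝ) < ‖W‖ := norm_pos_iff.mpr hW
  have hnv : ‖W‖ * ‖v‖ = ‖a‖ := by rw [← norm_mul, hWv]
  have hIoc_sub : Finset.Ioc s d ⊆ Finset.range (d + 1) := by
    intro i hi; rw [Finset.mem_range]; exact Nat.lt_succ_of_le (Finset.mem_Ioc.mp hi).2
  have hcio : ∑ i ∈ Finset.Ioc s d, ‖c i‖ ≤ R :=
    le_trans (Finset.sum_le_sum_of_subset_of_nonneg hIoc_sub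
      (fun i _ _ => norm_nonneg _)) hR
  rcases le_or_gt ‖v‖ (etaA s T R ε) with hA | hA
  · -- Case A : small v, use s-th root
    obtain ⟨ξ, hξ⟩ := IsAlgClosed.exists_pow_nat_eq v (n := s) (by omega)
    refine ⟨ξ, ?_⟩
    set E := ε / (4 * T * R) with hEdef
    have hE0 : 0 < E := by positivity
    have hBx : ‖ξ‖ ^ s = ‖v‖ := by rw [← norm_pow, hξ]
    have hB1 : ‖ξ‖ ≤ 1 := by
      refine (pow_le_one_iff_of_nonneg (norm_nonneg _) hs0).mp ?_
      rw [hBx]; exact le_trans hA (min_le_left _ _)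
    have hBe : ‖ξ‖ ≤ E := by
      refine (pow_le_pow_iff_left₀ (norm_nonneg _) hE0.le hs0).mp ?_
      rw [hBx]; exact le_trans hA (min_le_right _ _)
    have hpow : ∀ i ∈ Finset.Ioc s d, ‖ξ‖ ^ i ≤ ‖v‖ * ‖ξ‖ := by
      intro i hi
      have : ‖ξ‖ ^ i ≤ ‖ξ‖ ^ (s + 1) :=
        pow_le_pow_of_le_one (norm_nonneg _) hB1 (Finset.mem_Ioc.mp hi).1
      calc ‖ξ‖ ^ i ≤ ‖ξ‖ ^ (s+1) := this
      _ = ‖v‖ * ‖ξ‖ := by rw [pow_succ, hBx]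
    -- split the sum
    have hsplit : ∑ i ∈ Finset.range (d+1), c i * ξ ^ i
        = ξ ^ s + ∑ i ∈ Finset.Ioc s d, c i * ξ ^ i := by
      have h1 : ∑ i ∈ Finset.Icc s d, c i * ξ ^ i
          = ∑ i ∈ Finset.range (d+1), c i * ξ ^ i := by
        refine Finset.sum_subset (fun i hi => ?_) (fun i hi hni => ?_)
        · rw [Finset.mem_range]; exact Nat.lt_succ_of_le (Finset.mem_Icc.mp hi).2
        · have : i < s := by
            rw [Finset.mem_range] at hi
            rw [Finset.mem_Icc] at hni
            omega
          rw [hc0 i this, zero_mul]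
      rw [← h1, ← Finset.add_sum_erase _ _ (Finset.mem_Icc.mpr ⟨le_refl s, hsd⟩),
        Finset.Icc_erase_left, hcs, one_mul]
    have hterm1 : ‖W * (∑ i ∈ Finset.range (d+1), c i * ξ ^ i) - a‖ ≤ ε / 4 := by
      have he : W * (∑ i ∈ Finset.range (d+1), c i * ξ ^ i) - a
          = W * (∑ i ∈ Finset.Ioc s d, c i * ξ ^ i) := by
        rw [hsplit, mul_add, hξ, hWv]; ring
      rw [he, norm_mul]
      have h2 : ‖∑ i ∈ Finset.Ioc s d, c i * ξ ^ i‖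
          ≤ (∑ i ∈ Finset.Ioc s d, ‖c i‖) * (‖v‖ * ‖ξ‖) := by
        refine le_trans (norm_polysum_le _ _ _) ?_
        rw [Finset.sum_mul]
        refine Finset.sum_le_sum fun i hi => ?_
        exact mul_le_mul_of_nonneg_left (hpow i hi) (norm_nonneg _)
      calc ‖W‖ * ‖∑ i ∈ Finset.Ioc s d, c i * ξ ^ i‖
          ≤ ‖W‖ * ((∑ i ∈ Finset.Ioc s d, ‖c i‖) * (‖v‖ * ‖ξ‖)) := by
            exact mul_le_mul_of_nonneg_left h2 (norm_nonneg _)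
        _ = (∑ i ∈ Finset.Ioc s d, ‖c i‖) * ((‖W‖ * ‖v‖) * ‖ξ‖) := by ring
        _ ≤ R * (T * E) := by
            rw [hnv]
            have h3 : ‖a‖ * ‖ξ‖ ≤ T * E :=
              mul_le_mul ha hBe (norm_nonneg _) hT0.le
            exact mul_le_mul hcio h3 (by positivity) hR0.le
        _ = ε / 4 := by rw [hEdef]; field_simp
    have hterm2 : r * ‖W‖ * (∑ i ∈ Finset.Ioc s d, ‖ξ‖ ^ i) ≤ ε / 4 := by
      have hS3 : ∑ i ∈ Finset.Ioc s d, ‖ξ‖ ^ i ≤ (d:ℝ) * (‖v‖ * ‖ξ‖) :=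
        sum_Ioc_pow_le (by positivity) hpow
      calc r * ‖W‖ * (∑ i ∈ Finset.Ioc s d, ‖ξ‖ ^ i)
          ≤ r * ‖W‖ * ((d:ℝ) * (‖v‖ * ‖ξ‖)) := by
            exact mul_le_mul_of_nonneg_left hS3 (by positivity)
        _ = (r * (d:ℝ)) * ((‖W‖ * ‖v‖) * ‖ξ‖) := by ring
        _ ≤ 1 * (T * E) := by
            rw [hnv]
            refine mul_le_mul ?_ (mul_le_mul ha hBe (norm_nonneg _) hT0.le) (by positivity) one_pos.le
            calc r * (d:ℝ) ≤ (1/((d:ℝ)+1)) * (d:ℝ) :=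
                mul_le_mul_of_nonneg_right hr1 (Nat.cast_nonneg d)
            _ ≤ 1 := by
                rw [div_mul_eq_mul_div, one_mul, div_le_one (by positivity)]
                linarith
        _ ≤ T * R * E := by
            rw [one_mul]
            have : T * E = T * 1 * E := by ring
            rw [this]
            have : T * 1 * E ≤ T * R * E := by
              refine mul_le_mul_of_nonneg_right (mul_le_mul_of_nonneg_left hR1 hT0.le) hE0.le
            exact this
        _ = ε / 4 := by rw [hEdef]; field_simp
    linarith
  rcases le_or_gt (‖c d‖ * (Xi T R cd ε) ^ d) ‖v‖ with hC | hC
  · -- Case C : large v, use d-th root of v / c d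
    obtain ⟨ξ, hξ⟩ := IsAlgClosed.exists_pow_nat_eq (v / c d) (n := d) (by omega)
    refine ⟨ξ, ?_⟩
    have hX1 : 1 ≤ Xi T R cd ε := le_max_left _ _
    have hX2 : 4 * T * R / (cd * ε) ≤ Xi T R cd ε := le_max_right _ _
    have hX0 : 0 < Xi T R cd ε := lt_of_lt_of_le one_pos hX1
    have hGd : ‖ξ‖ ^ d = ‖v‖ / ‖c d‖ := by rw [← norm_pow, hξ, norm_div]
    have hGX : Xi T R cd ε ≤ ‖ξ‖ := by
      refine (pow_le_pow_iff_left₀ hX0.le (norm_nonneg _) hd0).mp ?_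
      rw [hGd, le_div_iff₀ hNcd]
      calc Xi T R cd ε ^ d * ‖c d‖ = ‖c d‖ * Xi T R cd ε ^ d := by ring
        _ ≤ ‖v‖ := hC
    have hG1 : 1 ≤ ‖ξ‖ := le_trans hX1 hGX
    have hG0 : (0:ℝ) < ‖ξ‖ := lt_of_lt_of_le one_pos hG1
    have hGdnn : (0:ℝ) ≤ ‖ξ‖ ^ d := pow_nonneg (norm_nonneg _) d
    have hcdv : c d * ξ ^ d = v := by rw [hξ]; field_simp
    have hWGd : ‖W‖ * ‖ξ‖ ^ d ≤ T / cd := by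
      rw [hGd]
      calc ‖W‖ * (‖v‖ / ‖c d‖) = (‖W‖ * ‖v‖) / ‖c d‖ := by ring
        _ = ‖a‖ / ‖c d‖ := by rw [hnv]
        _ ≤ T / cd := div_le_div₀ hT0.le ha hcd hcdle
    have hRd : ∑ i ∈ Finset.range d, ‖c i‖ ≤ R :=
      le_trans (Finset.sum_le_sum_of_subset_of_nonneg
        (Finset.range_subset_range.mpr (Nat.le_succ d)) (fun i _ _ => norm_nonneg _)) hR
    have hb : ∀ i ∈ Finset.range d, ‖c i‖ * ‖ξ‖ ^ i * ‖ξ‖ ≤ ‖c i‖ * ‖ξ‖ ^ d := by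
      intro i hi
      rw [mul_assoc, ← pow_succ]
      exact mul_le_mul_of_nonneg_left
        (pow_le_pow_right₀ hG1 (Finset.mem_range.mp hi)) (norm_nonneg _)
    have hterm1 : ‖W * (∑ i ∈ Finset.range (d+1), c i * ξ ^ i) - a‖ ≤ ε / 4 := by
      have he : W * (∑ i ∈ Finset.range (d+1), c i * ξ ^ i) - a
          = W * (∑ i ∈ Finset.range d, c i * ξ ^ i) := by
        rw [Finset.sum_range_succ, hcdv, mul_add, hWv]; ring
      rw [he, norm_mul]
      have h2 : ‖∑ i ∈ Finset.range d, c i * ξ ^ i‖ * ‖ξ‖ ≤ R * ‖ξ‖ ^ d := by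
        calc ‖∑ i ∈ Finset.range d, c i * ξ ^ i‖ * ‖ξ‖
            ≤ (∑ i ∈ Finset.range d, ‖c i‖ * ‖ξ‖ ^ i) * ‖ξ‖ :=
              mul_le_mul_of_nonneg_right (norm_polysum_le _ _ _) hG0.le
          _ = ∑ i ∈ Finset.range d, ‖c i‖ * ‖ξ‖ ^ i * ‖ξ‖ := by rw [Finset.sum_mul]
          _ ≤ ∑ i ∈ Finset.range d, ‖c i‖ * ‖ξ‖ ^ d := Finset.sum_le_sum hb
          _ = (∑ i ∈ Finset.range d, ‖c i‖) * ‖ξ‖ ^ d := by rw [← Finset.sum_mul]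
          _ ≤ R * ‖ξ‖ ^ d := mul_le_mul_of_nonneg_right hRd hGdnn
      have hcdG : 4 * T * R / ε ≤ cd * ‖ξ‖ := by
        calc 4 * T * R / ε = cd * (4 * T * R / (cd * ε)) := by
              field_simp
            _ ≤ cd * Xi T R cd ε := mul_le_mul_of_nonneg_left hX2 hcd.le
            _ ≤ cd * ‖ξ‖ := mul_le_mul_of_nonneg_left hGX hcd.le
      have hkey : (‖W‖ * ‖∑ i ∈ Finset.range d, c i * ξ ^ i‖) * (cd * ‖ξ‖) ≤ R * T := by
        calc (‖W‖ * ‖∑ i ∈ Finset.range d, c i * ξ ^ i‖) * (cd * ‖ξ‖)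
            = cd * (‖W‖ * (‖∑ i ∈ Finset.range d, c i * ξ ^ i‖ * ‖ξ‖)) := by ring
          _ ≤ cd * (‖W‖ * (R * ‖ξ‖ ^ d)) :=
              mul_le_mul_of_nonneg_left (mul_le_mul_of_nonneg_left h2 (norm_nonneg _)) hcd.le
          _ = R * (cd * (‖W‖ * ‖ξ‖ ^ d)) := by ring
          _ ≤ R * (cd * (T / cd)) :=
              mul_le_mul_of_nonneg_left (mul_le_mul_of_nonneg_left hWGd hcd.le) hR0.le
          _ = R * T := by field_simp
      have hRT : R * T ≤ ε / 4 * (cd * ‖ξ‖) := by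
        calc R * T = ε / 4 * (4 * T * R / ε) := by field_simp
          _ ≤ ε / 4 * (cd * ‖ξ‖) := mul_le_mul_of_nonneg_left hcdG (by positivity)
      exact le_of_mul_le_mul_right (le_trans hkey hRT) (mul_pos hcd hG0)
    have hterm2 : r * ‖W‖ * (∑ i ∈ Finset.Ioc s d, ‖ξ‖ ^ i) ≤ ε / 4 := by
      have hpowd : ∀ i ∈ Finset.Ioc s d, ‖ξ‖ ^ i ≤ ‖ξ‖ ^ d := fun i hi =>
        pow_le_pow_right₀ hG1 (Finset.mem_Ioc.mp hi).2
      have hS3 : ∑ i ∈ Finset.Ioc s d, ‖ξ‖ ^ i ≤ (d:ℝ) * ‖ξ‖ ^ d :=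
        sum_Ioc_pow_le hGdnn hpowd
      calc r * ‖W‖ * (∑ i ∈ Finset.Ioc s d, ‖ξ‖ ^ i)
          ≤ r * ‖W‖ * ((d:ℝ) * ‖ξ‖ ^ d) :=
            mul_le_mul_of_nonneg_left hS3 (mul_nonneg hr0.le (norm_nonneg _))
        _ = r * (d:ℝ) * (‖W‖ * ‖ξ‖ ^ d) := by ring
        _ ≤ (cd * ε / (4 * d * T + 1)) * (d:ℝ) * (T / cd) := by
            refine mul_le_mul (mul_le_mul_of_nonneg_right hr2 (Nat.cast_nonneg d)) hWGd
              (mul_nonneg (norm_nonneg _) hGdnn) ?_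
            exact mul_nonneg (by positivity) (Nat.cast_nonneg d)
        _ = ε * ((d:ℝ) * T) / (4 * (d:ℝ) * T + 1) := by
            field_simp
        _ ≤ ε / 4 := by
            rw [div_le_div_iff₀ (by positivity) (by norm_num)]
            nlinarith [hε.le, mul_nonneg (Nat.cast_nonneg (α := ℝ) d) hT0.le]
    linarith
  · -- Case B : middle regime, use a root of the polynomial
    have hM1 : 1 ≤ Mb d T R cd ε := one_le_Mb
    have hM0 : (0:ℝ) < Mb d T R cd ε := lt_of_lt_of_le one_pos hM1
    have hA0 : 0 < etaA s T R ε := etaA_pos hT0 hR0 hε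
    have hWb : ‖W‖ ≤ T / etaA s T R ε := by
      rw [le_div_iff₀ hA0]
      calc ‖W‖ * etaA s T R ε ≤ ‖W‖ * ‖v‖ :=
          mul_le_mul_of_nonneg_left hA.le (norm_nonneg _)
        _ = ‖a‖ := hnv
        _ ≤ T := ha
    set P : ℂ[X] := (∑ i ∈ Finset.range (d+1), Polynomial.C (c i) * Polynomial.X ^ i)
        - Polynomial.C v with hPdef
    have hPd : P.coeff d = c d := by
      rw [hPdef, Polynomial.coeff_sub, Polynomial.finset_sum_coeff]
      simp [Polynomial.coeff_C_mul_X_pow, Polynomial.coeff_C, hd0]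
    have hPdeg : 0 < P.degree :=
      lt_of_lt_of_le (by exact_mod_cast Nat.pos_of_ne_zero hd0)
        (Polynomial.le_degree_of_ne_zero (by rw [hPd]; exact hcdne))
    obtain ⟨ξ, hroot⟩ := Complex.exists_root hPdeg
    have heval : ∑ i ∈ Finset.range (d+1), c i * ξ ^ i = v := by
      have hr := hroot
      rw [Polynomial.IsRoot, hPdef, Polynomial.eval_sub, Polynomial.eval_finset_sum] at hr
      simp only [Polynomial.eval_mul, Polynomial.eval_C, Polynomial.eval_pow,
        Polynomial.eval_X] at hr
      linear_combination hr
    refine ⟨ξ, ?_⟩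
    have hG0 : (0:ℝ) ≤ ‖ξ‖ := norm_nonneg _
    have hGdnn : (0:ℝ) ≤ ‖ξ‖ ^ d := pow_nonneg hG0 d
    have hXnn : (0:ℝ) ≤ (Xi T R cd ε) ^ d :=
      pow_nonneg (le_trans zero_le_one (le_max_left _ _)) d
    have hvb : ‖v‖ ≤ R * (Xi T R cd ε) ^ d := by
      have hcdR : ‖c d‖ ≤ R := le_trans (Finset.single_le_sum (f := fun i => ‖c i‖)
        (fun i _ => norm_nonneg _) (Finset.mem_range.mpr (Nat.lt_succ_self d))) hR
      calc ‖v‖ ≤ ‖c d‖ * (Xi T R cd ε) ^ d := hC.le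
        _ ≤ R * (Xi T R cd ε) ^ d := mul_le_mul_of_nonneg_right hcdR hXnn
    have hRd : ∑ i ∈ Finset.range d, ‖c i‖ ≤ R :=
      le_trans (Finset.sum_le_sum_of_subset_of_nonneg
        (Finset.range_subset_range.mpr (Nat.le_succ d)) (fun i _ _ => norm_nonneg _)) hR
    have hGM : ‖ξ‖ ≤ Mb d T R cd ε := by
      rcases le_or_gt ‖ξ‖ 1 with h1 | h1
      · exact le_trans h1 hM1
      · have hGd0 : 0 < ‖ξ‖ ^ d := pow_pos (lt_trans one_pos h1) d
        have hGGd : ‖ξ‖ ≤ ‖ξ‖ ^ d := by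
          conv_lhs => rw [← pow_one ‖ξ‖]
          exact pow_le_pow_right₀ h1.le hd1
        have hb : ∀ i ∈ Finset.range d, ‖c i‖ * ‖ξ‖ ^ i * ‖ξ‖ ≤ ‖c i‖ * ‖ξ‖ ^ d := by
          intro i hi
          rw [mul_assoc, ← pow_succ]
          exact mul_le_mul_of_nonneg_left
            (pow_le_pow_right₀ h1.le (Finset.mem_range.mp hi)) (norm_nonneg _)
        have hcdxi : c d * ξ ^ d = v - ∑ i ∈ Finset.range d, c i * ξ ^ i := by
          rw [← heval, Finset.sum_range_succ]; ring
        have h4 : ‖c d‖ * ‖ξ‖ ^ d ≤ ‖v‖ + ∑ i ∈ Finset.range d, ‖c i‖ * ‖ξ‖ ^ i := by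
          calc ‖c d‖ * ‖ξ‖ ^ d = ‖c d * ξ ^ d‖ := by rw [norm_mul, norm_pow]
            _ = ‖v - ∑ i ∈ Finset.range d, c i * ξ ^ i‖ := by rw [hcdxi]
            _ ≤ ‖v‖ + ‖∑ i ∈ Finset.range d, c i * ξ ^ i‖ := norm_sub_le _ _
            _ ≤ _ := add_le_add le_rfl (norm_polysum_le _ _ _)
        have h6 : (‖v‖ + ∑ i ∈ Finset.range d, ‖c i‖ * ‖ξ‖ ^ i) * ‖ξ‖
            ≤ R * (Xi T R cd ε) ^ d * ‖ξ‖ ^ d + R * ‖ξ‖ ^ d := by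
          rw [add_mul]
          refine add_le_add ?_ ?_
          · exact mul_le_mul hvb hGGd hG0 (mul_nonneg hR0.le hXnn)
          · rw [Finset.sum_mul]
            calc ∑ i ∈ Finset.range d, ‖c i‖ * ‖ξ‖ ^ i * ‖ξ‖
                ≤ ∑ i ∈ Finset.range d, ‖c i‖ * ‖ξ‖ ^ d := Finset.sum_le_sum hb
              _ = (∑ i ∈ Finset.range d, ‖c i‖) * ‖ξ‖ ^ d := by rw [← Finset.sum_mul]
              _ ≤ R * ‖ξ‖ ^ d := mul_le_mul_of_nonneg_right hRd hGdnn
        have h7 : cd * ‖ξ‖ * ‖ξ‖ ^ d ≤ (R + R * (Xi T R cd ε) ^ d) * ‖ξ‖ ^ d := by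
          calc cd * ‖ξ‖ * ‖ξ‖ ^ d = cd * ‖ξ‖ ^ d * ‖ξ‖ := by ring
            _ ≤ ‖c d‖ * ‖ξ‖ ^ d * ‖ξ‖ :=
                mul_le_mul_of_nonneg_right (mul_le_mul_of_nonneg_right hcdle hGdnn) hG0
            _ ≤ (‖v‖ + ∑ i ∈ Finset.range d, ‖c i‖ * ‖ξ‖ ^ i) * ‖ξ‖ :=
                mul_le_mul_of_nonneg_right h4 hG0
            _ ≤ R * (Xi T R cd ε) ^ d * ‖ξ‖ ^ d + R * ‖ξ‖ ^ d := h6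
            _ = (R + R * (Xi T R cd ε) ^ d) * ‖ξ‖ ^ d := by ring
        have h8 : cd * ‖ξ‖ ≤ R + R * (Xi T R cd ε) ^ d :=
          le_of_mul_le_mul_right h7 hGd0
        have h9 : ‖ξ‖ ≤ (R + R * (Xi T R cd ε) ^ d) / cd :=
          (le_div_iff₀ hcd).mpr (by rw [mul_comm]; exact h8)
        exact le_trans h9 (le_max_right _ _)
    have hterm2 : r * ‖W‖ * (∑ i ∈ Finset.Ioc s d, ‖ξ‖ ^ i) ≤ ε / 4 := by
      have hpows : ∀ i ∈ Finset.Ioc s d, ‖ξ‖ ^ i ≤ (Mb d T R cd ε) ^ d := by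
        intro i hi
        calc ‖ξ‖ ^ i ≤ (Mb d T R cd ε) ^ i := pow_le_pow_left₀ hG0 hGM i
          _ ≤ (Mb d T R cd ε) ^ d := pow_le_pow_right₀ hM1 (Finset.mem_Ioc.mp hi).2
      have hMdnn : (0:ℝ) < (Mb d T R cd ε) ^ d := pow_pos hM0 d
      have hS3 : ∑ i ∈ Finset.Ioc s d, ‖ξ‖ ^ i ≤ (d:ℝ) * (Mb d T R cd ε) ^ d :=
        sum_Ioc_pow_le hMdnn.le hpows
      have hK0 : (0:ℝ) ≤ (d:ℝ) * T * (Mb d T R cd ε) ^ d :=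
        mul_nonneg (mul_nonneg (Nat.cast_nonneg d) hT0.le) hMdnn.le
      have hD0 : (0:ℝ) < 4 * ((d:ℝ) * T * (Mb d T R cd ε) ^ d) + 1 := by linarith
      have hr3' : r ≤ ε * etaA s T R ε / (4 * ((d:ℝ) * T * (Mb d T R cd ε) ^ d) + 1) := by
        have he9 : 4 * (d:ℝ) * T * (Mb d T R cd ε) ^ d + 1
            = 4 * ((d:ℝ) * T * (Mb d T R cd ε) ^ d) + 1 := by ring
        rw [← he9]; exact hr3
      calc r * ‖W‖ * (∑ i ∈ Finset.Ioc s d, ‖ξ‖ ^ i)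
          ≤ r * ‖W‖ * ((d:ℝ) * (Mb d T R cd ε) ^ d) :=
            mul_le_mul_of_nonneg_left hS3 (mul_nonneg hr0.le (norm_nonneg _))
        _ ≤ r * (T / etaA s T R ε) * ((d:ℝ) * (Mb d T R cd ε) ^ d) :=
            mul_le_mul_of_nonneg_right (mul_le_mul_of_nonneg_left hWb hr0.le)
              (mul_nonneg (Nat.cast_nonneg d) hMdnn.le)
        _ = r * (((d:ℝ) * T * (Mb d T R cd ε) ^ d) / etaA s T R ε) := by ring
        _ ≤ (ε * etaA s T R ε / (4 * ((d:ℝ) * T * (Mb d T R cd ε) ^ d) + 1))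
            * (((d:ℝ) * T * (Mb d T R cd ε) ^ d) / etaA s T R ε) :=
            mul_le_mul_of_nonneg_right hr3' (div_nonneg hK0 hA0.le)
        _ = ε * ((d:ℝ) * T * (Mb d T R cd ε) ^ d)
            / (4 * ((d:ℝ) * T * (Mb d T R cd ε) ^ d) + 1) := by
            rw [div_mul_div_comm]
            rw [div_eq_div_iff (mul_pos hD0 hA0).ne' hD0.ne']
            ring
        _ ≤ ε / 4 := by
            rw [div_le_div_iff₀ hD0 (by norm_num)]
            nlinarith [hε.le, hK0]
    rw [heval, hWv, sub_self, norm_zero, zero_add]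
    exact lt_of_le_of_lt hterm2 (by linarith)


/-! ### Rational data -/

def Q2C (p : ℚ × ℚ) : ℂ := (p.1 : ℂ) + (p.2 : ℂ) * Complex.I

theorem Q2C_approx (z : ℂ) (η : ℝ) (hη : 0 < η) : ∃ p : ℚ × ℚ, ‖Q2C p - z‖ < η := by
  obtain ⟨q1, hq1⟩ := exists_rat_near z.re (half_pos hη)
  obtain ⟨q2, hq2⟩ := exists_rat_near z.im (half_pos hη)
  refine ⟨(q1, q2), ?_⟩
  have h1 : (Q2C (q1, q2) - z).re = (q1 : ℝ) - z.re := by simp [Q2C]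
  have h2 : (Q2C (q1, q2) - z).im = (q2 : ℝ) - z.im := by simp [Q2C]
  calc ‖Q2C (q1, q2) - z‖ ≤ |(Q2C (q1, q2) - z).re| + |(Q2C (q1, q2) - z).im| :=
      Complex.norm_le_abs_re_add_abs_im _
    _ < η := by
      rw [h1, h2, abs_sub_comm ((q1:ℝ)) z.re, abs_sub_comm ((q2:ℝ)) z.im]
      linarith

theorem getD_ofFn {α : Type*} (n : ℕ) (f : Fin n → α) (k : ℕ) (hk : k < n) (dflt : α) :
    (List.ofFn f).getD k dflt = f ⟨k, hk⟩ := by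
  simp [List.getD_eq_getElem?_getD, List.getElem?_ofFn, List.ofFnNthVal, hk]

structure Dat where
  s : ℕ
  d : ℕ
  m : ℕ
  cl : List (ℚ × ℚ)
  tl : List (ℚ × ℚ)
  e : ℚ
  Tb : ℚ
  Rb : ℚ
  cb : ℚ

instance : Countable Dat :=
  Function.Injective.countable
    (f := fun δ : Dat => (δ.s, δ.d, δ.m, δ.cl, δ.tl, δ.e, δ.Tb, δ.Rb, δ.cb))
    (by rintro ⟨⟩ ⟨⟩ h; simpa using h)

def cD (δ : Dat) : ℕ → ℂ := fun i =>
  if i < δ.s then 0 else if i = δ.s then 1 else if i ≤ δ.d then Q2C (δ.cl.getD i (0,0)) else 0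

def tD (δ : Dat) : ℕ → ℂ := fun k => Q2C (δ.tl.getD k (0,0))

def Adm (δ : Dat) : Prop :=
  1 ≤ δ.s ∧ δ.s ≤ δ.d ∧ 0 < ((δ.e : ℝ)) ∧ 1 ≤ ((δ.Tb : ℝ)) ∧
  (∀ k, k < δ.m → ‖tD δ k‖ ≤ ((δ.Tb : ℝ))) ∧
  (∑ i ∈ Finset.range (δ.d + 1), ‖cD δ i‖ ≤ ((δ.Rb : ℝ))) ∧
  0 < ((δ.cb : ℝ)) ∧ ((δ.cb : ℝ)) ≤ ‖cD δ δ.d‖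

def rD (δ : Dat) : ℝ := rFun δ.s δ.d ((δ.Rb : ℝ)) ((δ.cb : ℝ)) ((δ.Tb : ℝ)) ((δ.e : ℝ))

/-- the basic open sets -/
def good (w : ℕ → ℂ) (δ : Dat) (n : ℕ) : Set (ℕ → ℂ) :=
  ⋂ k ∈ Finset.range δ.m,
    {φ : ℕ → ℂ |
      ‖Wn w n k * (∑ i ∈ Finset.range (δ.d + 1), cD δ i * (φ (k + n)) ^ i) - tD δ k‖
        + rD δ * ‖Wn w n k‖ * (∑ i ∈ Finset.Ioc δ.s δ.d, ‖φ (k + n)‖ ^ i) < ((δ.e : ℝ))}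

def Sset (w : ℕ → ℂ) (δ : Dat) : Set (ℕ → ℂ) :=
  {φ : ℕ → ℂ | ¬ Adm δ} ∪ ⋃ n, good w δ n

theorem isOpen_Sset (w : ℕ → ℂ) (δ : Dat) : IsOpen (Sset w δ) := by
  refine IsOpen.union ?_ (isOpen_iUnion fun n => ?_)
  · by_cases h : Adm δ
    · have : {φ : ℕ → ℂ | ¬ Adm δ} = (∅ : Set (ℕ → ℂ)) := by simp [h]
      rw [this]; exact isOpen_empty
    · have : {φ : ℕ → ℂ | ¬ Adm δ} = (Set.univ : Set (ℕ → ℂ)) := by simp [h]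
      rw [this]; exact isOpen_univ
  · refine isOpen_biInter_finset fun k _ => ?_
    have hc : Continuous fun φ : ℕ → ℂ =>
        ‖Wn w n k * (∑ i ∈ Finset.range (δ.d + 1), cD δ i * (φ (k + n)) ^ i) - tD δ k‖
        + rD δ * ‖Wn w n k‖ * (∑ i ∈ Finset.Ioc δ.s δ.d, ‖φ (k + n)‖ ^ i) := by
      have capp : Continuous fun φ : ℕ → ℂ => φ (k + n) := continuous_apply (k + n)
      refine Continuous.add ?_ ?_
      · refine Continuous.norm ?_
        refine Continuous.sub ?_ continuous_const
        refine Continuous.mul continuous_const ?_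
        exact continuous_finset_sum _ fun i _ => continuous_const.mul (capp.pow i)
      · refine Continuous.mul continuous_const ?_
        exact continuous_finset_sum _ fun i _ => (capp.norm.pow i)
    exact isOpen_lt hc continuous_const

/-! ### Neighborhood windows in the product topology -/

theorem nbhd_window (z : ℕ → ℂ) (U : Set (ℕ → ℂ)) (hU : U ∈ 𝓝 z) :
    ∃ (N : ℕ) (ε : ℝ), 0 < ε ∧ ∀ y : ℕ → ℂ, (∀ k, k ≤ N → ‖y k - z k‖ < ε) → y ∈ U := by
  rw [nhds_pi] at hU
  obtain ⟨I, hIfin, V, hV, hsub⟩ := Filter.mem_pi.mp hU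
  have hball : ∀ i : ℕ, ∃ ε : ℝ, 0 < ε ∧ Metric.ball (z i) ε ⊆ V i := fun i => by
    obtain ⟨ε, hε, hb⟩ := Metric.mem_nhds_iff.mp (hV i)
    exact ⟨ε, hε, hb⟩
  choose εf hεf hbf using hball
  classical
  set F : Finset ℕ := insert 0 hIfin.toFinset with hF
  have hFne : F.Nonempty := ⟨0, Finset.mem_insert_self _ _⟩
  refine ⟨F.sup id, F.inf' hFne εf, ?_, ?_⟩
  · rw [Finset.lt_inf'_iff]; exact fun i _ => hεf i
  · intro y hy
    apply hsub
    rw [Set.mem_pi]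
    intro i hi
    have hiF : i ∈ F := by
      rw [hF, Finset.mem_insert]
      exact Or.inr (hIfin.mem_toFinset.mpr hi)
    apply hbf i
    rw [Metric.mem_ball, dist_eq_norm]
    exact lt_of_lt_of_le (hy i (Finset.le_sup (f := id) hiF)) (Finset.inf'_le _ hiF)

/-! ### Density of the good sets -/

theorem dense_Sset (w : ℕ → ℂ) (hw : ∀ n : ℕ, 1 ≤ n → w n ≠ 0) (δ : Dat) :
    Dense (Sset w δ) := by
  by_cases hadm : Adm δ
  · intro x₀
    rw [mem_closure_iff_nhds]
    intro U hU
    obtain ⟨N, ε₀, hε₀, hwin⟩ := nbhd_window x₀ U hU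
    obtain ⟨hs, hsd, he, hTb, ht, hRb, hcb0, hcble⟩ := hadm
    set n := N + 1 with hn
    -- for each k < δ.m pick a value by the solve lemma
    have hsolve : ∀ k : ℕ, ∃ ξ : ℂ,
        ‖Wn w n k * (∑ i ∈ Finset.range (δ.d + 1), cD δ i * ξ ^ i) - tD δ k‖
          + rD δ * ‖Wn w n k‖ * (∑ i ∈ Finset.Ioc δ.s δ.d, ‖ξ‖ ^ i) < ((δ.e : ℝ)) ∨
        ¬ (k < δ.m) := by
      intro k
      by_cases hk : k < δ.m
      · have hcs : cD δ δ.s = 1 := by simp [cD]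
        have hc0 : ∀ i, i < δ.s → cD δ i = 0 := fun i hi => by simp [cD, hi]
        obtain ⟨ξ, hξ⟩ := solve δ.s δ.d hs hsd (cD δ) hcs hc0
          ((δ.Rb : ℝ)) ((δ.cb : ℝ)) ((δ.Tb : ℝ)) ((δ.e : ℝ)) hRb hcb0 hcble hTb he
          (tD δ k) (Wn w n k) (Wn_ne_zero w hw n k) (ht k hk)
        exact ⟨ξ, Or.inl hξ⟩
      · exact ⟨0, Or.inr hk⟩
    choose ξ hξ using hsolve
    set x' : ℕ → ℂ := fun j => if h : n ≤ j ∧ j - n < δ.m then ξ (j - n) else x₀ j with hx'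
    refine ⟨x', hwin x' ?_, ?_⟩
    · intro k hk
      have : ¬ (n ≤ k ∧ k - n < δ.m) := by omega
      rw [hx']
      simp only [this, dif_neg, not_false_iff]
      simpa using hε₀
    · rw [Sset]
      refine Set.mem_union_right _ ?_
      refine Set.mem_iUnion.mpr ⟨n, ?_⟩
      rw [good, Set.mem_iInter₂]
      intro k hk
      rw [Finset.mem_range] at hk
      have hval : x' (k + n) = ξ k := by
        have h1 : n ≤ k + n ∧ (k + n) - n < δ.m := by omega
        have h2 : (k + n) - n = k := by omega
        simp only [hx', dif_pos h1, h2]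
      rw [Set.mem_setOf_eq, hval]
      rcases hξ k with h | h
      · exact h
      · exact absurd hk h
  · intro x₀
    rw [mem_closure_iff_nhds]
    intro U hU
    exact ⟨x₀, mem_of_mem_nhds hU, Set.mem_union_left _ hadm⟩

theorem exists_xstar (w : ℕ → ℂ) (hw : ∀ n : ℕ, 1 ≤ n → w n ≠ 0) :
    ∃ x : ℕ → ℂ, ∀ δ : Dat, x ∈ Sset w δ := by
  have hd : Dense (⋂ δ : Dat, Sset w δ) :=
    dense_iInter_of_isOpen (fun δ => isOpen_Sset w δ) (fun δ => dense_Sset w hw δ)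
  obtain ⟨x, hx⟩ := hd.nonempty
  exact ⟨x, fun δ => Set.mem_iInter.mp hx δ⟩

/-! ### The window property for normalized coefficient sequences -/

set_option maxHeartbeats 1000000 in
theorem window (w : ℕ → ℂ) (x : ℕ → ℂ) (hx : ∀ δ : Dat, x ∈ Sset w δ)
    (s d : ℕ) (hs : 1 ≤ s) (hsd : s ≤ d) (γ : ℕ → ℂ)
    (hγs : γ s = 1) (hγlo : ∀ i, i < s → γ i = 0) (hγd : γ d ≠ 0)
    (m : ℕ) (t : ℕ → ℂ) (ε : ℝ) (hε : 0 < ε) :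
    ∃ n, ∀ k, k < m →
      ‖Wn w n k * (∑ i ∈ Finset.range (d+1), γ i * (x (k+n)) ^ i) - t k‖ < ε := by
  classical
  -- rational tolerance
  obtain ⟨e, he0, he2⟩ := exists_rat_btwn (half_pos hε)
  -- rational targets
  have htapp : ∀ k : ℕ, ∃ p : ℚ × ℚ, ‖Q2C p - t k‖ < ε / 2 :=
    fun k => Q2C_approx (t k) (ε / 2) (half_pos hε)
  choose tp htp using htapp
  set tval : ℕ → ℂ := fun k => Q2C (tp k) with htval
  -- bound for the targets
  obtain ⟨Tb, hTb⟩ := exists_rat_gt (1 + ∑ k ∈ Finset.range m, ‖tval k‖)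
  have htsum_nn : (0:ℝ) ≤ ∑ k ∈ Finset.range m, ‖tval k‖ :=
    Finset.sum_nonneg fun k _ => norm_nonneg _
  have hTb1 : 1 ≤ ((Tb : ℝ)) := by linarith
  have htv : ∀ k, k < m → ‖tval k‖ ≤ ((Tb : ℝ)) := by
    intro k hk
    have h1 : ‖tval k‖ ≤ ∑ k ∈ Finset.range m, ‖tval k‖ :=
      Finset.single_le_sum (f := fun k => ‖tval k‖) (fun i _ => norm_nonneg _)
        (Finset.mem_range.mpr hk)
    linarith
  -- bound for the coefficients
  have hγsum1 : 1 ≤ ∑ i ∈ Finset.range (d+1), ‖γ i‖ := by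
    calc (1:ℝ) = ‖γ s‖ := by rw [hγs]; simp
      _ ≤ _ := Finset.single_le_sum (f := fun i => ‖γ i‖) (fun i _ => norm_nonneg _)
          (Finset.mem_range.mpr (by omega))
  obtain ⟨Rb, hRb⟩ := exists_rat_gt ((∑ i ∈ Finset.range (d+1), ‖γ i‖) + 1)
  have hRb1 : 1 ≤ ((Rb : ℝ)) := by linarith
  -- lower bound for the leading coefficient
  have hγdn : 0 < ‖γ d‖ := norm_pos_iff.mpr hγd
  obtain ⟨cb, hcb0, hcb2⟩ := exists_rat_btwn (half_pos hγdn)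
  -- the radius
  set ρ := rFun s d ((Rb:ℝ)) ((cb:ℝ)) ((Tb:ℝ)) ((e:ℝ)) with hρdef
  have hρ0 : 0 < ρ := rFun_pos hRb1 hcb0 hTb1 he0
  set tol := min ρ (min (‖γ d‖/2) (1/((d:ℝ)+1))) with htoldef
  have htol0 : 0 < tol := by
    refine lt_min hρ0 (lt_min (half_pos hγdn) (by positivity))
  have htolρ : tol ≤ ρ := min_le_left _ _
  have htolγ : tol ≤ ‖γ d‖/2 := le_trans (min_le_right _ _) (min_le_left _ _)
  have htold : tol ≤ 1/((d:ℝ)+1) := le_trans (min_le_right _ _) (min_le_right _ _)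
  -- rational coefficients
  have hcapp : ∀ i : ℕ, ∃ p : ℚ × ℚ, ‖Q2C p - γ i‖ < tol :=
    fun i => Q2C_approx (γ i) tol htol0
  choose cp hcp using hcapp
  -- the datum
  set δ : Dat := ⟨s, d, m, List.ofFn (fun i : Fin (d+1) => cp i),
    List.ofFn (fun k : Fin m => tp k), e, Tb, Rb, cb⟩ with hδdef
  -- decodings
  have htD : ∀ k, k < m → tD δ k = tval k := by
    intro k hk
    rw [htval]
    show Q2C ((List.ofFn (fun k : Fin m => tp k)).getD k (0,0)) = Q2C (tp k)
    rw [getD_ofFn m _ k hk]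
  have hcD_low : ∀ i, i ≤ s → cD δ i = γ i := by
    intro i hi
    rcases lt_or_eq_of_le hi with h | h
    · show (if i < s then 0 else _) = γ i
      rw [if_pos h, hγlo i h]
    · show (if i < s then 0 else if i = s then 1 else _) = γ i
      rw [if_neg (by omega), if_pos h, h, hγs]
  have hcD_mid : ∀ i, s < i → i ≤ d → cD δ i = Q2C (cp i) := by
    intro i h1 h2
    show (if i < s then 0 else if i = s then 1
      else if i ≤ d then Q2C ((List.ofFn (fun i : Fin (d+1) => cp i)).getD i (0,0)) else 0)
      = Q2C (cp i)
    rw [if_neg (by omega), if_neg (by omega), if_pos h2, getD_ofFn (d+1) _ i (by omega)]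
  have hcDdiff : ∀ i, i ∈ Finset.range (d+1) → ‖cD δ i - γ i‖ ≤ tol := by
    intro i hi
    rw [Finset.mem_range] at hi
    rcases le_or_gt i s with h | h
    · rw [hcD_low i h, sub_self, norm_zero]; exact htol0.le
    · rw [hcD_mid i h (by omega)]
      exact (hcp i).le
  -- admissibility
  have hadm : Adm δ := by
    refine ⟨hs, hsd, he0, hTb1, ?_, ?_, hcb0, ?_⟩
    · intro k hk
      rw [htD k hk]
      exact htv k hk
    · calc ∑ i ∈ Finset.range (d+1), ‖cD δ i‖
          ≤ ∑ i ∈ Finset.range (d+1), (‖γ i‖ + 1/((d:ℝ)+1)) := by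
            refine Finset.sum_le_sum fun i hi => ?_
            calc ‖cD δ i‖ = ‖γ i + (cD δ i - γ i)‖ := by congr 1; ring
              _ ≤ ‖γ i‖ + ‖cD δ i - γ i‖ := norm_add_le _ _
              _ ≤ ‖γ i‖ + 1/((d:ℝ)+1) := by
                  have := le_trans (hcDdiff i hi) htold
                  linarith
        _ = (∑ i ∈ Finset.range (d+1), ‖γ i‖) + 1 := by
            rw [Finset.sum_add_distrib, Finset.sum_const, Finset.card_range, nsmul_eq_mul]
            congr 1
            push_cast
            field_simp
        _ ≤ ((Rb : ℝ)) := hRb.le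
    · have hdr : d ∈ Finset.range (d+1) := Finset.mem_range.mpr (by omega)
      have h1 : ‖cD δ d - γ d‖ ≤ ‖γ d‖/2 := le_trans (hcDdiff d hdr) htolγ
      have h2 : ‖γ d‖ ≤ ‖cD δ d‖ + ‖cD δ d - γ d‖ := by
        calc ‖γ d‖ = ‖cD δ d + (γ d - cD δ d)‖ := by congr 1; ring
          _ ≤ ‖cD δ d‖ + ‖γ d - cD δ d‖ := norm_add_le _ _
          _ = ‖cD δ d‖ + ‖cD δ d - γ d‖ := by rw [norm_sub_rev]
      have : (cb : ℝ) ≤ ‖γ d‖ / 2 := hcb2.le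
      linarith
  -- use the generic point
  have hxs := hx δ
  rcases hxs with hbad | hgood
  · exact absurd hadm hbad
  obtain ⟨Sn, hSn⟩ := Set.mem_iUnion.mp hgood
  refine ⟨Sn, fun k hk => ?_⟩
  rw [good, Set.mem_iInter₂] at hSn
  have hIne := hSn k (Finset.mem_range.mpr hk)
  rw [Set.mem_setOf_eq] at hIne
  set ξ := x (k + Sn) with hξdef
  set WW := Wn w Sn k with hWWdef
  -- difference of the two polynomial values
  have hIoc_sub : Finset.Ioc s d ⊆ Finset.range (d + 1) := by
    intro i hi
    rw [Finset.mem_range]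
    exact Nat.lt_succ_of_le (Finset.mem_Ioc.mp hi).2
  have hdsum : ‖WW * (∑ i ∈ Finset.range (d+1), γ i * ξ ^ i)
      - WW * (∑ i ∈ Finset.range (d+1), cD δ i * ξ ^ i)‖
      ≤ rD δ * ‖WW‖ * (∑ i ∈ Finset.Ioc s d, ‖ξ‖ ^ i) := by
    have he1 : (∑ i ∈ Finset.range (d+1), γ i * ξ ^ i)
        - (∑ i ∈ Finset.range (d+1), cD δ i * ξ ^ i)
        = ∑ i ∈ Finset.Ioc s d, (γ i - cD δ i) * ξ ^ i := by
      have h0 : ∑ i ∈ Finset.Ioc s d, (γ i - cD δ i) * ξ ^ i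
          = ∑ i ∈ Finset.range (d+1), (γ i - cD δ i) * ξ ^ i := by
        refine Finset.sum_subset hIoc_sub fun i hi hni => ?_
        have his : i ≤ s := by
          rw [Finset.mem_range] at hi
          rw [Finset.mem_Ioc] at hni
          omega
        rw [hcD_low i his]
        ring
      rw [h0, ← Finset.sum_sub_distrib]
      exact Finset.sum_congr rfl fun i _ => by ring
    rw [← mul_sub, he1, norm_mul]
    rw [mul_comm (rD δ) ‖WW‖, mul_assoc]
    refine mul_le_mul_of_nonneg_left ?_ (norm_nonneg _)
    calc ‖∑ i ∈ Finset.Ioc s d, (γ i - cD δ i) * ξ ^ i‖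
        ≤ ∑ i ∈ Finset.Ioc s d, ‖γ i - cD δ i‖ * ‖ξ‖ ^ i := norm_polysum_le _ _ _
      _ ≤ ∑ i ∈ Finset.Ioc s d, rD δ * ‖ξ‖ ^ i := by
          refine Finset.sum_le_sum fun i hi => ?_
          refine mul_le_mul_of_nonneg_right ?_ (pow_nonneg (norm_nonneg _) i)
          rw [norm_sub_rev]
          have hrD : rD δ = ρ := rfl
          exact le_trans (hcDdiff i (hIoc_sub hi)) (le_trans htolρ hrD.ge)
      _ = rD δ * ∑ i ∈ Finset.Ioc s d, ‖ξ‖ ^ i := by rw [Finset.mul_sum]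
  -- put the triangle inequality together
  have htri : ‖WW * (∑ i ∈ Finset.range (d+1), γ i * ξ ^ i) - t k‖
      ≤ ‖WW * (∑ i ∈ Finset.range (d+1), γ i * ξ ^ i)
          - WW * (∑ i ∈ Finset.range (d+1), cD δ i * ξ ^ i)‖
        + ‖WW * (∑ i ∈ Finset.range (d+1), cD δ i * ξ ^ i) - tD δ k‖
        + ‖tD δ k - t k‖ := by
    calc ‖WW * (∑ i ∈ Finset.range (d+1), γ i * ξ ^ i) - t k‖
        = ‖(WW * (∑ i ∈ Finset.range (d+1), γ i * ξ ^ i)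
            - WW * (∑ i ∈ Finset.range (d+1), cD δ i * ξ ^ i))
          + ((WW * (∑ i ∈ Finset.range (d+1), cD δ i * ξ ^ i) - tD δ k)
          + (tD δ k - t k))‖ := by congr 1; ring
      _ ≤ _ := by
          refine le_trans (norm_add_le _ _) ?_
          rw [add_assoc]
          exact add_le_add le_rfl (norm_add_le _ _)
  have hlast : ‖tD δ k - t k‖ < ε / 2 := by
    rw [htD k hk]
    exact htp k
  have hS3nn : (0:ℝ) ≤ ∑ i ∈ Finset.Ioc s d, ‖ξ‖ ^ i :=
    Finset.sum_nonneg fun i _ => pow_nonneg (norm_nonneg _) i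
  have he2' : (e : ℝ) < ε / 2 := he2
  linarith [htri, hdsum, hIne, hlast]

/-! ### Hypercyclicity of all polynomial images -/

theorem keyDense (w : ℕ → ℂ) (x : ℕ → ℂ) (hx : ∀ δ : Dat, x ∈ Sset w δ)
    (q : Polynomial ℂ) (hq : q ≠ 0) (h0 : q.coeff 0 = 0) :
    Dense (Set.range fun n : ℕ => (Bw w)^[n] fun j => q.eval (x j)) := by
  have hsne : q.coeff q.natTrailingDegree ≠ 0 := by
    have h := Polynomial.trailingCoeff_nonzero_iff_nonzero.mpr hq
    rwa [Polynomial.trailingCoeff] at h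
  have hs : 1 ≤ q.natTrailingDegree := by
    have h1 : q.natTrailingDegree ≠ 0 := fun h => hsne (by rw [h, h0])
    omega
  have hsd := Polynomial.natTrailingDegree_le_natDegree q
  have hdne : q.coeff q.natDegree ≠ 0 := by
    rw [Polynomial.coeff_natDegree]
    exact Polynomial.leadingCoeff_ne_zero.mpr hq
  set u := (q.coeff q.natTrailingDegree)⁻¹ with hu
  have hune : u ≠ 0 := inv_ne_zero hsne
  set γ : ℕ → ℂ := fun i => u * q.coeff i with hγ
  have hγs : γ q.natTrailingDegree = 1 := inv_mul_cancel₀ hsne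
  have hγlo : ∀ i, i < q.natTrailingDegree → γ i = 0 := fun i hi => by
    rw [hγ]
    simp [Polynomial.coeff_eq_zero_of_lt_natTrailingDegree hi]
  have hγd : γ q.natDegree ≠ 0 := mul_ne_zero hune hdne
  intro z
  rw [mem_closure_iff_nhds]
  intro U hU
  obtain ⟨N, ε₀, hε₀, hwin⟩ := nbhd_window z U hU
  have hεu : 0 < ε₀ * ‖u‖ := mul_pos hε₀ (norm_pos_iff.mpr hune)
  obtain ⟨n, hn⟩ := window w x hx q.natTrailingDegree q.natDegree hs hsd γ hγs hγlo hγd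
    (N + 1) (fun k => u * z k) (ε₀ * ‖u‖) hεu
  refine ⟨(Bw w)^[n] (fun j => q.eval (x j)), hwin _ ?_, Set.mem_range_self n⟩
  intro k hk
  have hb := Bw_iter w n (fun j => q.eval (x j)) k
  have hev : ∑ i ∈ Finset.range (q.natDegree + 1), γ i * (x (k + n)) ^ i
      = u * q.eval (x (k + n)) := by
    rw [Polynomial.eval_eq_sum_range, Finset.mul_sum]
    exact Finset.sum_congr rfl fun i _ => by rw [hγ]; ring
  have h1 := hn k (by omega)
  rw [hev] at h1
  have h2 : Wn w n k * (u * q.eval (x (k + n))) - u * z k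
      = (Wn w n k * q.eval (x (k + n)) - z k) * u := by ring
  rw [h2, norm_mul] at h1
  rw [hb]
  exact lt_of_mul_lt_mul_right h1 (norm_nonneg u)

/-! ### The algebra generated by x -/

def Aalg (x : ℕ → ℂ) : NonUnitalSubalgebra ℂ (ℕ → ℂ) where
  carrier := {y | ∃ q : Polynomial ℂ, q.coeff 0 = 0 ∧ y = fun j => q.eval (x j)}
  add_mem' := by
    rintro a b ⟨p, hp, rfl⟩ ⟨q, hq, rfl⟩
    exact ⟨p + q, by simp [hp, hq], by funext j; simp⟩
  zero_mem' := ⟨0, by simp, by funext j; simp⟩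
  mul_mem' := by
    rintro a b ⟨p, hp, rfl⟩ ⟨q, hq, rfl⟩
    exact ⟨p * q, by simp [Polynomial.mul_coeff_zero, hp, hq], by funext j; simp⟩
  smul_mem' := by
    rintro c a ⟨p, hp, rfl⟩
    exact ⟨c • p, by simp [hp], by funext j; simp⟩

theorem mem_Aalg (x : ℕ → ℂ) (y : ℕ → ℂ) :
    y ∈ Aalg x ↔ ∃ q : Polynomial ℂ, q.coeff 0 = 0 ∧ y = fun j => q.eval (x j) :=
  Iff.rfl

end HCA
end

/-- **Theorem.** Every weighted backward shift on `ω = ℂ^{ℕ₀}` (with the product topology and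
the coordinatewise product) supports a hypercyclic algebra. -/
theorem weighted_shift_omega_hypercyclic_algebra
    (w : ℕ → ℂ) (hw : ∀ n : ℕ, 1 ≤ n → w n ≠ 0) :
    ∃ A : NonUnitalSubalgebra ℂ (ℕ → ℂ), (∃ x ∈ A, x ≠ 0) ∧
      ∀ x ∈ A, x ≠ 0 → Dense (Set.range fun n : ℕ => (Bw w)^[n] x) := by
  obtain ⟨x, hx⟩ := HCA.exists_xstar w hw
  have key : ∀ q : Polynomial ℂ, q ≠ 0 → q.coeff 0 = 0 →
      Dense (Set.range fun n : ℕ => (Bw w)^[n] fun j => q.eval (x j)) :=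
    fun q hq h0 => HCA.keyDense w x hx q hq h0
  have hxmem : x ∈ HCA.Aalg x :=
    ⟨Polynomial.X, Polynomial.coeff_X_zero, by funext j; simp⟩
  have hxne : x ≠ 0 := by
    intro h
    have hd := key Polynomial.X Polynomial.X_ne_zero Polynomial.coeff_X_zero
    have h1 : (fun j => Polynomial.X.eval (x j)) = (0 : ℕ → ℂ) := by
      funext j; rw [h]; simp
    rw [h1] at hd
    have h2 : ∀ n : ℕ, (Bw w)^[n] (0 : ℕ → ℂ) = 0 := by
      intro n; funext k
      rw [HCA.Bw_iter]
      simp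
    have h3 : (Set.range fun n : ℕ => (Bw w)^[n] (0 : ℕ → ℂ)) = {(0 : ℕ → ℂ)} := by
      ext y
      simp [h2]
    rw [h3] at hd
    have h5 : (fun _ : ℕ => (1 : ℂ)) ∈ closure ({(0 : ℕ → ℂ)} : Set (ℕ → ℂ)) := hd _
    rw [IsClosed.closure_eq isClosed_singleton] at h5
    have h6 := congrFun (Set.mem_singleton_iff.mp h5) 0
    exact one_ne_zero h6
  refine ⟨HCA.Aalg x, ⟨x, hxmem, hxne⟩, ?_⟩
  intro y hy hyne
  obtain ⟨q, h0, rfl⟩ := (HCA.mem_Aalg x y).mp hy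
  have hqne : q ≠ 0 := by
    intro h
    apply hyne
    funext j; rw [h]; simp
  exact key q hqne h0
end

section
/- Let (a(p))_{p≥1} be any sequence of positive real numbers. Then there exists a sequence (A(p))_{p≥1} of pairwise disjoint subsets of ℕ such that: (i) each set A(p) has positive lower density; (ii) min A(p) ≥ a(p), and |n − n′| ≥ a(p) + a(q) whenever n ≠ n′ and (n, n′) ∈ A(p) × A(q); (iii) for every C > 0 there exists κ > 0 such that for all p ≠ q and all (n, n′) ∈ A(p) × A(q) with max(n, n′) ≥ κ, one has |n − n′| ≥ C. -/
open Filter Topology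

/-- The set `E ⊆ ℕ` has positive lower density. -/
def LowerDensPos (E : Set ℕ) : Prop :=
  0 < Filter.liminf (fun N : ℕ => ((E ∩ Set.Icc 0 N).ncard : ℝ) / (N + 1)) Filter.atTop

namespace SepAux

variable (a : ℕ → ℝ)

/-- integer upper bound for `a p`, at least 1 -/
noncomputable def bb (p : ℕ) : ℕ := max 1 ⌈a p⌉₊

/-- first block in which class `p` appears -/
noncomputable def KK (p : ℕ) : ℕ := 2 * p + 3 * bb a p + 10

/-- maximum of `bb` over classes present in block `k` -/
noncomputable def BB (k : ℕ) : ℕ := ((Finset.Icc 1 k).filter fun p => KK a p ≤ k).sup (bb a)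

/-- the gap size used in block `k` -/
noncomputable def gg (k : ℕ) : ℕ := k + 2 * BB a k

/-- the sets -/
def AA (p : ℕ) : Set ℕ :=
  { n | ∃ k j : ℕ, KK a p ≤ k ∧
      n = 2 ^ (k + 1 - p) * (2 ^ p - 1) + gg a k + j * (2 * bb a p) ∧
      n + 2 * bb a p + gg a k ≤ 2 ^ (k - p) * (2 ^ (p + 1) - 1) }

lemma one_le_bb (p : ℕ) : 1 ≤ bb a p := le_max_left _ _

lemma a_le_bb (p : ℕ) : a p ≤ (bb a p : ℝ) := by
  refine (Nat.le_ceil (a p)).trans ?_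
  exact_mod_cast le_max_right 1 ⌈a p⌉₊

lemma BB_le (k : ℕ) : 3 * BB a k ≤ k := by
  have h : BB a k ≤ k / 3 := by
    apply Finset.sup_le
    intro p hp
    simp only [Finset.mem_filter, Finset.mem_Icc] at hp
    have h1 : 3 * bb a p ≤ KK a p := by unfold KK; omega
    have h2 : 3 * bb a p ≤ k := h1.trans hp.2
    omega
  omega

lemma gg_le (k : ℕ) : gg a k ≤ 2 * k := by
  have := BB_le a k; unfold gg; omega

lemma p_le_KK (p : ℕ) : p + 1 ≤ KK a p := by unfold KK; omega

lemma bb_le_gg {p k : ℕ} (hp : 1 ≤ p) (hk : KK a p ≤ k) : 2 * bb a p ≤ gg a k := by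
  have hpk : p ≤ k := by have := p_le_KK a p; omega
  have h : bb a p ≤ BB a k := by
    apply Finset.le_sup
    simp only [Finset.mem_filter, Finset.mem_Icc]
    exact ⟨⟨hp, hpk⟩, hk⟩
  unfold gg; omega

lemma exp_big {p : ℕ} (hp : 1 ≤ p) : ∀ k, KK a p ≤ k → 16 * k ≤ 2 ^ (k - p) := by
  intro k hk
  induction k, hk using Nat.le_induction with
  | base =>
    have hb : KK a p - p = p + 3 * bb a p + 10 := by unfold KK; omega
    rw [hb]
    have h1 : p + 3 * bb a p < 2 ^ (p + 3 * bb a p) := Nat.lt_two_pow_self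
    have h2 : 2 ^ (p + 3 * bb a p + 10) = 1024 * 2 ^ (p + 3 * bb a p) := by
      rw [pow_add]; ring
    unfold KK
    omega
  | succ k hk ih =>
    have hpk : p ≤ k := by have := p_le_KK a p; omega
    have h1 : k + 1 - p = (k - p) + 1 := by omega
    rw [h1, pow_succ]
    have hk1 : 1 ≤ k := by have := p_le_KK a p; omega
    omega

lemma pow_split {p m : ℕ} (h : p ≤ m) :
    2 ^ (m - p) * (2 ^ p - 1) + 2 ^ (m - p) = 2 ^ m := by
  have h1 : 1 ≤ 2 ^ p := Nat.one_le_two_pow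
  have h3 : 2 ^ (m - p) * (2 ^ p - 1 + 1) = 2 ^ (m - p) * 2 ^ p := by
    rw [Nat.sub_add_cancel h1]
  rw [mul_add, mul_one] at h3
  have h2 : 2 ^ (m - p) * 2 ^ p = 2 ^ m := by
    rw [← pow_add]; congr 1; omega
  omega

lemma mem_facts {p n k j : ℕ} (hp : 1 ≤ p) (hk : KK a p ≤ k)
    (he : n = 2 ^ (k + 1 - p) * (2 ^ p - 1) + gg a k + j * (2 * bb a p))
    (hf : n + 2 * bb a p + gg a k ≤ 2 ^ (k - p) * (2 ^ (p + 1) - 1)) :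
    2 ^ k + gg a k ≤ n ∧ n + 2 * bb a p + gg a k + 2 ^ (k - p) ≤ 2 ^ (k + 1) := by
  have hpk : p ≤ k := by have := p_le_KK a p; omega
  have h1 := pow_split (show p ≤ k + 1 by omega)
  have h2 : 2 ^ (k - p) * (2 ^ (p + 1) - 1) + 2 ^ (k - p) = 2 ^ (k + 1) := by
    have := pow_split (show p + 1 ≤ k + 1 by omega)
    simpa [show k + 1 - (p + 1) = k - p from by omega] using this
  have h5 : 2 ^ (k + 1 - p) ≤ 2 ^ k := Nat.pow_le_pow_right (by norm_num) (by omega)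
  have h4 : 2 ^ (k + 1) = 2 * 2 ^ k := by rw [pow_succ]; ring
  omega

/-- two classes cannot share a point -/
lemma not_mem_both {p q n : ℕ} (hp : 1 ≤ p) (hpq : p < q)
    (h1 : n ∈ AA a p) (h2 : n ∈ AA a q) : False := by
  obtain ⟨k, j, hk, he, hf⟩ := h1
  obtain ⟨k', j', hk', he', hf'⟩ := h2
  have hq : 1 ≤ q := by omega
  have F := mem_facts a hp hk he hf
  have F' := mem_facts a hq hk' he' hf'
  have hqk' : q ≤ k' := by have := p_le_KK a q; omega
  have e1 : 1 ≤ 2 ^ (k - p) := Nat.one_le_two_pow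
  have e2 : 1 ≤ 2 ^ (k' - q) := Nat.one_le_two_pow
  -- blocks coincide
  have hkk : k = k' := by
    rcases Nat.lt_trichotomy k k' with h | h | h
    · have : 2 ^ (k + 1) ≤ 2 ^ k' := Nat.pow_le_pow_right (by norm_num) (by omega)
      omega
    · exact h
    · have : 2 ^ (k' + 1) ≤ 2 ^ k := Nat.pow_le_pow_right (by norm_num) (by omega)
      omega
  subst hkk
  -- region of p is strictly left of region of q
  have hXq : 2 ^ (k + 1 - q) * (2 ^ q - 1) + 2 ^ (k + 1 - q) = 2 ^ (k + 1) :=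
    pow_split (by omega)
  have hcmp : 2 ^ (k + 1 - q) ≤ 2 ^ (k - p) :=
    Nat.pow_le_pow_right (by norm_num) (by omega)
  have hg : 1 ≤ gg a k := by unfold gg; have := p_le_KK a p; omega
  -- n ≥ X_q + g   and   n + 2 b p + g + 2^{k-p} ≤ 2^{k+1} = X_q + 2^{k+1-q}
  have hnlow : 2 ^ (k + 1 - q) * (2 ^ q - 1) + gg a k ≤ n := by omega
  omega

/-- main separation lemma -/
lemma sep_main {p q n n' : ℕ} (hp : 1 ≤ p) (hq : 1 ≤ q)
    (hn : n ∈ AA a p) (hn' : n' ∈ AA a q) (hlt : n < n') :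
    n + bb a p + bb a q ≤ n' ∧ (p ≠ q → ∀ K : ℕ, 2 ^ K ≤ n' → n + K ≤ n') := by
  obtain ⟨k, j, hk, he, hf⟩ := hn
  obtain ⟨k', j', hk', he', hf'⟩ := hn'
  have F := mem_facts a hp hk he hf
  have F' := mem_facts a hq hk' he' hf'
  have hpk : p ≤ k := by have := p_le_KK a p; omega
  have hqk' : q ≤ k' := by have := p_le_KK a q; omega
  have hgp : 2 * bb a p ≤ gg a k := bb_le_gg a hp hk
  have hgq : 2 * bb a q ≤ gg a k' := bb_le_gg a hq hk'
  have hgk' : k' ≤ gg a k' := by unfold gg; omega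
  have e1 : 1 ≤ 2 ^ (k - p) := Nat.one_le_two_pow
  have e2 : 1 ≤ 2 ^ (k' - q) := Nat.one_le_two_pow
  have hn'up : n' < 2 ^ (k' + 1) := by
    have h1 : 1 ≤ 2 ^ (k' - q) := Nat.one_le_two_pow
    omega
  -- k ≤ k'
  have hkk' : k ≤ k' := by
    by_contra h
    have : 2 ^ (k' + 1) ≤ 2 ^ k := Nat.pow_le_pow_right (by norm_num) (by omega)
    omega
  have hmain : n + bb a p + bb a q ≤ n' ∧ (p ≠ q → n + gg a k' ≤ n') := by
    rcases eq_or_lt_of_le hkk' with rfl | hlt'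
    · -- same block
      rcases Nat.lt_trichotomy p q with hpq | rfl | hqp
      · -- p < q : region of p left of region of q
        have hXq : 2 ^ (k + 1 - q) * (2 ^ q - 1) + 2 ^ (k + 1 - q) = 2 ^ (k + 1) :=
          pow_split (by omega)
        have hcmp : 2 ^ (k + 1 - q) ≤ 2 ^ (k - p) :=
          Nat.pow_le_pow_right (by norm_num) (by omega)
        have hn'low : 2 ^ (k + 1 - q) * (2 ^ q - 1) + gg a k ≤ n' := by omega
        constructor
        · omega
        · intro _; omega
      · -- same class, same block: arithmetic progression
        constructor
        · rcases Nat.lt_or_ge j j' with hj | hj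
          · have h1 : (j + 1) * (2 * bb a p) ≤ j' * (2 * bb a p) :=
              Nat.mul_le_mul_right _ hj
            have h2 : (j + 1) * (2 * bb a p) = j * (2 * bb a p) + 2 * bb a p := by ring
            omega
          · have h1 : j' * (2 * bb a p) ≤ j * (2 * bb a p) :=
              Nat.mul_le_mul_right _ hj
            omega
        · intro h; exact absurd rfl h
      · -- q < p : impossible since n < n'
        exfalso
        have hXp : 2 ^ (k + 1 - p) * (2 ^ p - 1) + 2 ^ (k + 1 - p) = 2 ^ (k + 1) :=
          pow_split (by omega)
        have hcmp : 2 ^ (k + 1 - p) ≤ 2 ^ (k - q) :=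
          Nat.pow_le_pow_right (by norm_num) (by omega)
        have hnlow : 2 ^ (k + 1 - p) * (2 ^ p - 1) + gg a k ≤ n := by omega
        omega
    · -- different blocks
      have h1 : 2 ^ (k + 1) ≤ 2 ^ k' := Nat.pow_le_pow_right (by norm_num) (by omega)
      generalize 2 ^ (k - p) = E1 at *
      generalize 2 ^ (k' - q) = E2 at *
      constructor
      · omega
      · intro _; omega
  refine ⟨hmain.1, fun hpq K hK => ?_⟩
  have h2 := hmain.2 hpq
  have hKk' : K ≤ k' := by
    by_contra h
    have : 2 ^ (k' + 1) ≤ 2 ^ K := Nat.pow_le_pow_right (by norm_num) (by omega)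
    omega
  omega

/-- the counting lemma: many points of `AA a p` in block `m` -/
lemma count_lemma {p m : ℕ} (hp : 1 ≤ p) (hm : KK a p ≤ m) :
    ∃ L : ℕ, 2 ^ (m + 2) ≤ 2 ^ (p + 6) * bb a p * L ∧
      ∀ j < L, (2 ^ (m + 1 - p) * (2 ^ p - 1) + gg a m + j * (2 * bb a p)) ∈ AA a p ∧
        2 ^ (m + 1 - p) * (2 ^ p - 1) + gg a m + j * (2 * bb a p) ≤ 2 ^ (m + 1) := by
  have hpm : p ≤ m := by have := p_le_KK a p; omega
  have hbpos : 0 < bb a p := one_le_bb a p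
  have hb3 : 3 * bb a p ≤ m := by
    have : 3 * bb a p ≤ KK a p := by unfold KK; omega
    omega
  obtain ⟨E, hEdef⟩ : ∃ E, E = 2 ^ (m - p) := ⟨_, rfl⟩
  have hE16 : 16 * m ≤ E := by rw [hEdef]; exact exp_big a hp m hm
  have h16b : 16 * bb a p ≤ E := by omega
  obtain ⟨L, hLdef⟩ : ∃ L, L = E / (8 * bb a p) := ⟨_, rfl⟩
  have hdiv1 : E = 8 * (bb a p * L) + E % (8 * bb a p) := by
    have h0 := Nat.div_add_mod E (8 * bb a p)
    rw [← hLdef] at h0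
    have h : 8 * bb a p * L = 8 * (bb a p * L) := by ring
    omega
  have hmod : E % (8 * bb a p) < 8 * bb a p := Nat.mod_lt _ (by omega)
  have hL1 : 1 ≤ L := by
    rw [hLdef, Nat.one_le_div_iff (by omega)]
    omega
  have hbL : bb a p ≤ bb a p * L := Nat.le_mul_of_pos_right _ hL1
  have hEt : E ≤ 16 * (bb a p * L) := by omega
  obtain ⟨X, hXdef⟩ : ∃ X, X = 2 ^ (m + 1 - p) * (2 ^ p - 1) := ⟨_, rfl⟩
  obtain ⟨Y, hYdef⟩ : ∃ Y, Y = 2 ^ (m - p) * (2 ^ (p + 1) - 1) := ⟨_, rfl⟩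
  have hX : X + 2 * E = 2 ^ (m + 1) := by
    have h1 := pow_split (show p ≤ m + 1 by omega)
    have h2 : 2 ^ (m + 1 - p) = 2 * E := by
      rw [hEdef, ← pow_succ']; congr 1; omega
    rw [hXdef, h2]
    rw [h2] at h1
    omega
  have hY : Y + E = 2 ^ (m + 1) := by
    have h1 := pow_split (show p + 1 ≤ m + 1 by omega)
    rw [show m + 1 - (p + 1) = m - p from by omega] at h1
    rw [hYdef, ← hEdef] at *
    omega
  refine ⟨L, ?_, ?_⟩
  · have hE : 2 ^ p * E = 2 ^ m := by rw [hEdef, ← pow_add]; congr 1; omega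
    calc 2 ^ (m + 2) = (2 ^ p * E) * 4 := by rw [hE, pow_add]; ring
      _ ≤ (2 ^ p * (16 * (bb a p * L))) * 4 :=
          Nat.mul_le_mul_right 4 (Nat.mul_le_mul_left _ hEt)
      _ = 2 ^ (p + 6) * bb a p * L := by rw [pow_add]; ring
  · intro j hj
    have hg : gg a m ≤ 2 * m := gg_le a m
    have hj2 : (j + 1) * (2 * bb a p) ≤ L * (2 * bb a p) := Nat.mul_le_mul_right _ hj
    have ht2 : L * (2 * bb a p) * 4 = 8 * (bb a p * L) := by ring
    have hj3 : (j + 1) * (2 * bb a p) = j * (2 * bb a p) + 2 * bb a p := by ring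
    have hfit : X + gg a m + j * (2 * bb a p) + 2 * bb a p + gg a m ≤ Y := by omega
    have hfit' : 2 ^ (m + 1 - p) * (2 ^ p - 1) + gg a m + j * (2 * bb a p) +
        2 * bb a p + gg a m ≤ 2 ^ (m - p) * (2 ^ (p + 1) - 1) := by
      rw [← hXdef, ← hYdef]; exact hfit
    refine ⟨⟨m, j, hm, rfl, hfit'⟩, ?_⟩
    rw [← hXdef]
    omega

lemma density {p : ℕ} (hp : 1 ≤ p) : LowerDensPos (AA a p) := by
  set b := bb a p with hbdef
  have hbpos : 0 < b := one_le_bb a p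
  set c : ℝ := 1 / (2 ^ (p + 6) * b) with hcdef
  have hc : 0 < c := by
    rw [hcdef]
    positivity
  have hev : ∀ᶠ N in atTop,
      c ≤ ((AA a p ∩ Set.Icc 0 N).ncard : ℝ) / (N + 1) := by
    filter_upwards [Filter.eventually_ge_atTop (2 ^ (KK a p + 2))] with N hN
    have hN0 : N ≠ 0 := by
      have h := Nat.one_le_two_pow (n := KK a p + 2)
      omega
    set k := Nat.log 2 N with hkdef
    have hk1 : 2 ^ k ≤ N := Nat.pow_log_le_self 2 hN0
    have hk2 : N < 2 ^ (k + 1) := Nat.lt_pow_succ_log_self (by norm_num) N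
    have hkK : KK a p + 2 ≤ k := (Nat.le_log_iff_pow_le (by norm_num) hN0).mpr hN
    set m := k - 1 with hmdef
    have hm : KK a p ≤ m := by omega
    have hmk : m + 1 = k := by omega
    obtain ⟨L, hL1, hL2⟩ := count_lemma a hp hm
    set f : ℕ → ℕ := fun j => 2 ^ (m + 1 - p) * (2 ^ p - 1) + gg a m + j * (2 * b)
      with hfdef
    have hinj : Function.Injective f := by
      intro x y hxy
      simp only [hfdef] at hxy
      have : x * (2 * b) = y * (2 * b) := by omega
      exact Nat.eq_of_mul_eq_mul_right (by omega) this
    set F := (Finset.range L).image f with hFdef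
    have hcard : F.card = L := by
      rw [hFdef, Finset.card_image_of_injective _ hinj, Finset.card_range]
    have hsub : ↑F ⊆ AA a p ∩ Set.Icc 0 N := by
      intro x hx
      simp only [hFdef, Finset.coe_image, Finset.coe_range, Set.mem_image,
        Set.mem_Iio] at hx
      obtain ⟨j, hj, rfl⟩ := hx
      obtain ⟨hmem, hle⟩ := hL2 j hj
      refine ⟨hmem, ?_⟩
      simp only [Set.mem_Icc]
      refine ⟨Nat.zero_le _, ?_⟩
      calc f j ≤ 2 ^ (m + 1) := hle
        _ = 2 ^ k := by rw [hmk]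
        _ ≤ N := hk1
    have hfin : (AA a p ∩ Set.Icc 0 N).Finite :=
      (Set.finite_Icc 0 N).subset Set.inter_subset_right
    have hLcard : L ≤ (AA a p ∩ Set.Icc 0 N).ncard := by
      rw [← hcard, ← Set.ncard_coe_finset]
      exact Set.ncard_le_ncard hsub hfin
    rw [le_div_iff₀ (by positivity)]
    have hNm : (N : ℝ) + 1 ≤ 2 ^ (m + 2) := by
      have : N + 1 ≤ 2 ^ (m + 2) := by
        have : m + 2 = k + 1 := by omega
        rw [this]; omega
      exact_mod_cast this
    calc c * ((N : ℝ) + 1) ≤ c * 2 ^ (m + 2) := by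
          apply mul_le_mul_of_nonneg_left hNm (le_of_lt hc)
      _ ≤ L := by
          rw [hcdef]
          rw [div_mul_eq_mul_div, one_mul, div_le_iff₀ (by positivity)]
          have : (2 : ℝ) ^ (m + 2) ≤ 2 ^ (p + 6) * b * L := by exact_mod_cast hL1
          linarith [this]
      _ ≤ ((AA a p ∩ Set.Icc 0 N).ncard : ℝ) := by exact_mod_cast hLcard
  have hcb : IsCoboundedUnder (· ≥ ·) atTop
      (fun N : ℕ => ((AA a p ∩ Set.Icc 0 N).ncard : ℝ) / (N + 1)) :=
    Filter.isCoboundedUnder_ge_of_eventually_le atTop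
      (Eventually.of_forall fun N => by
        have h1 : (AA a p ∩ Set.Icc 0 N).ncard ≤ (Set.Icc 0 N).ncard :=
          Set.ncard_le_ncard Set.inter_subset_right (Set.finite_Icc 0 N)
        have h2 : (Set.Icc (0 : ℕ) N).ncard = N + 1 := by
          rw [← Finset.coe_Icc, Set.ncard_coe_finset, Nat.card_Icc]
          omega
        have h3 : ((AA a p ∩ Set.Icc 0 N).ncard : ℝ) ≤ N + 1 := by
          rw [h2] at h1; exact_mod_cast h1
        rw [div_le_one (by positivity)]
        exact h3)
  have := Filter.le_liminf_of_le hcb hev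
  unfold LowerDensPos
  linarith

end SepAux

/-- **Theorem (separated sets of positive lower density).** Given any sequence `(a p)` of
positive real numbers, there is a sequence `(A p)` of pairwise disjoint subsets of `ℕ` such
that: each `A p` has positive lower density; `min A p ≥ a p` and `|n − n′| ≥ a p + a q`
whenever `n ≠ n′`, `(n, n′) ∈ A p × A q`; and for every `C > 0` there is `κ > 0` such that
`|n − n′| ≥ C` whenever `(n, n′) ∈ A p × A q` with `p ≠ q` and `max n n′ ≥ κ`. -/
theorem exists_separated_sets_of_positive_lower_density
    (a : ℕ → ℝ) (ha : ∀ p : ℕ, 1 ≤ p → 0 < a p) :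
    ∃ A : ℕ → Set ℕ,
      (∀ p q : ℕ, 1 ≤ p → 1 ≤ q → p ≠ q → Disjoint (A p) (A q)) ∧
      (∀ p : ℕ, 1 ≤ p → LowerDensPos (A p)) ∧
      (∀ p : ℕ, 1 ≤ p → ∀ n ∈ A p, a p ≤ (n : ℝ)) ∧
      (∀ p q : ℕ, 1 ≤ p → 1 ≤ q → ∀ n ∈ A p, ∀ n' ∈ A q, n ≠ n' →
        a p + a q ≤ |(n : ℝ) - (n' : ℝ)|) ∧
      (∀ C : ℝ, 0 < C → ∃ κ : ℝ, 0 < κ ∧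
        ∀ p q : ℕ, 1 ≤ p → 1 ≤ q → p ≠ q → ∀ n ∈ A p, ∀ n' ∈ A q,
          κ ≤ (max n n' : ℕ) → C ≤ |(n : ℝ) - (n' : ℝ)|) := by
  refine ⟨SepAux.AA a, ?_, ?_, ?_, ?_, ?_⟩
  · -- disjointness
    intro p q hp hq hpq
    rw [Set.disjoint_left]
    intro n hn hn'
    rcases Nat.lt_or_ge p q with h | h
    · exact SepAux.not_mem_both a hp h hn hn'
    · exact SepAux.not_mem_both a hq (by omega) hn' hn
  · -- density
    intro p hp
    exact SepAux.density a hp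
  · -- min condition
    intro p hp n hn
    obtain ⟨k, j, hk, he, hf⟩ := hn
    have F := SepAux.mem_facts a hp hk he hf
    have h1 : SepAux.bb a p ≤ n := by
      have h2 : SepAux.bb a p ≤ SepAux.KK a p := by unfold SepAux.KK; omega
      have h3 : k < 2 ^ k := (Nat.lt_two_pow_self (n := k))
      omega
    calc a p ≤ (SepAux.bb a p : ℝ) := SepAux.a_le_bb a p
      _ ≤ (n : ℝ) := by exact_mod_cast h1
  · -- separation a p + a q
    intro p q hp hq n hn n' hn' hne
    have key : ∀ pp qq x y : ℕ, 1 ≤ pp → 1 ≤ qq →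
        x ∈ SepAux.AA a pp → y ∈ SepAux.AA a qq → x < y →
        a pp + a qq ≤ (y : ℝ) - (x : ℝ) := by
      intro pp qq x y hpp hqq hx hy hxy
      have h := (SepAux.sep_main a hpp hqq hx hy hxy).1
      have h2 : a pp ≤ (SepAux.bb a pp : ℝ) := SepAux.a_le_bb a pp
      have h3 : a qq ≤ (SepAux.bb a qq : ℝ) := SepAux.a_le_bb a qq
      have h4 : (x : ℝ) + (SepAux.bb a pp : ℝ) + (SepAux.bb a qq : ℝ) ≤ (y : ℝ) := by
        exact_mod_cast h
      linarith
    rcases Nat.lt_or_ge n n' with h | h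
    · have := key p q n n' hp hq hn hn' h
      rw [abs_of_nonpos (by simp; exact_mod_cast h.le)]
      linarith
    · have hlt : n' < n := by omega
      have := key q p n' n hq hp hn' hn hlt
      rw [abs_of_nonneg (by simp; exact_mod_cast hlt.le)]
      linarith
  · -- the C condition
    intro C hC
    set K := ⌈C⌉₊ with hKdef
    refine ⟨(2 : ℝ) ^ K, by positivity, ?_⟩
    intro p q hp hq hpq n hn n' hn' hκ
    have key : ∀ x y : ℕ, ∀ pp qq : ℕ, 1 ≤ pp → 1 ≤ qq → pp ≠ qq →
        x ∈ SepAux.AA a pp → y ∈ SepAux.AA a qq → x < y → (2 : ℝ) ^ K ≤ (y : ℕ) →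
        C ≤ (y : ℝ) - (x : ℝ) := by
      intro x y pp qq hpp hqq hppqq hx hy hxy hKy
      have hKy' : 2 ^ K ≤ y := by exact_mod_cast hKy
      have h := (SepAux.sep_main a hpp hqq hx hy hxy).2 hppqq K hKy'
      have h1 : (x : ℝ) + (K : ℝ) ≤ (y : ℝ) := by exact_mod_cast h
      have h2 : C ≤ (K : ℝ) := Nat.le_ceil C
      linarith
    have hne : n ≠ n' := by
      intro h
      subst h
      rcases Nat.lt_or_ge p q with h | h
      · exact SepAux.not_mem_both a hp h hn hn'
      · exact SepAux.not_mem_both a hq (by omega) hn' hn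
    rcases Nat.lt_or_ge n n' with h | h
    · have hmax : max n n' = n' := max_eq_right h.le
      rw [hmax] at hκ
      have := key n n' p q hp hq hpq hn hn' h hκ
      rw [abs_of_nonpos (by simp; exact_mod_cast h.le)]
      linarith
    · have hlt : n' < n := by omega
      have hmax : max n n' = n := max_eq_left h
      rw [hmax] at hκ
      have := key n' n q p hq hp (Ne.symm hpq) hn' hn hlt hκ
      rw [abs_of_nonneg (by simp; exact_mod_cast hlt.le)]
      linarith
end
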